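/- arXiv:2406.17054 — 10 statements merged into one kernel-verified Lean document; each statement's English description precedes it below -/
import Mathlib

section
/- Let W be a measurable space, p > 0 and b ∈ [1,2]. Let ν be a nonzero finite signed measure on W, let σ = dν/d|ν| be the Radon–Nikodym derivative of ν with respect to its total variation measure |ν| (so σ takes values ±1 |ν|-a.e.), and let μ be the pushforward of the probability measure ‖ν‖_TV^{-1}·|ν| under the map w ↦ ( σ(w)·‖ν‖_TV^{1/p}, w ) from W to ℝ × W. Then μ is a Borel probability measure on ℝ × W satisfying: (a) ∫_{ℝ×A} sign(r)·|r|^p dμ(r,w) = ν(A) for every measurable A ⊆ W, i.e. the signed p-homogeneous projection of μ equals ν; and (b) ( ∫ |r|^{pb} dμ(r,w) )^{2/b} = ‖ν‖_TV². -/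
open MeasureTheory
open scoped ENNReal NNReal

lemma measurable_real_sign : Measurable Real.sign := by
  have h : Real.sign = fun r : ℝ => if r < 0 then (-1 : ℝ) else if 0 < r then 1 else 0 := by
    funext r; rfl
  rw [h]
  exact Measurable.ite (measurableSet_lt measurable_id measurable_const) measurable_const
    (Measurable.ite (measurableSet_lt measurable_const measurable_id) measurable_const
      measurable_const)

lemma abs_rnDeriv_totalVariation_ae {W : Type*} [MeasurableSpace W] (ν : SignedMeasure W) :
    ∀ᵐ w ∂ν.totalVariation, |ν.rnDeriv ν.totalVariation w| = 1 := by
  set P := ν.toJordanDecomposition.posPart with hP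
  set N := ν.toJordanDecomposition.negPart with hN
  set T := ν.totalVariation with hTdef
  have hT : T = P + N := rfl
  haveI : IsFiniteMeasure P := ν.toJordanDecomposition.posPart_finite
  haveI : IsFiniteMeasure N := ν.toJordanDecomposition.negPart_finite
  haveI : IsFiniteMeasure T := by rw [hT]; infer_instance
  obtain ⟨S, hSm, hPS, hNS⟩ := ν.toJordanDecomposition.mutuallySingular
  have hsum : (fun w => P.rnDeriv T w + N.rnDeriv T w) =ᵐ[T] fun _ => (1 : ℝ≥0∞) := by
    have h1 := Measure.rnDeriv_add' P N T
    have h2 := Measure.rnDeriv_self T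
    rw [← hT] at h1
    filter_upwards [h1, h2] with w hw1 hw2
    simp only [Pi.add_apply] at hw1
    rw [← hw1, hw2]
  have hP0 : ∀ᵐ w ∂T, w ∈ S → P.rnDeriv T w = 0 := by
    have hle : ∫⁻ w in S, P.rnDeriv T w ∂T ≤ P S := Measure.setLIntegral_rnDeriv_le S
    have h0 : ∫⁻ w in S, P.rnDeriv T w ∂T = 0 :=
      le_antisymm (hPS ▸ hle) (zero_le)
    rw [lintegral_eq_zero_iff (Measure.measurable_rnDeriv _ _)] at h0
    exact (ae_restrict_iff' hSm).mp h0
  have hN0 : ∀ᵐ w ∂T, w ∈ Sᶜ → N.rnDeriv T w = 0 := by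
    have hle : ∫⁻ w in Sᶜ, N.rnDeriv T w ∂T ≤ N Sᶜ := Measure.setLIntegral_rnDeriv_le Sᶜ
    have h0 : ∫⁻ w in Sᶜ, N.rnDeriv T w ∂T = 0 :=
      le_antisymm (hNS ▸ hle) (zero_le)
    rw [lintegral_eq_zero_iff (Measure.measurable_rnDeriv _ _)] at h0
    exact (ae_restrict_iff' hSm.compl).mp h0
  filter_upwards [hsum, hP0, hN0] with w hw hwP hwN
  show |(P.rnDeriv T w).toReal - (N.rnDeriv T w).toReal| = 1
  by_cases hwS : w ∈ S
  · have h1 : P.rnDeriv T w = 0 := hwP hwS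
    have h2 : N.rnDeriv T w = 1 := by simpa [h1] using hw
    simp [h1, h2]
  · have h1 : N.rnDeriv T w = 0 := hwN hwS
    have h2 : P.rnDeriv T w = 1 := by simpa [h1] using hw
    simp [h1, h2]

/-- attainment half of Lemma F.1.
For a nonzero finite signed measure `ν`, with `σ = dν/d|ν|`, the pushforward `μ` of
`‖ν‖_TV⁻¹ • |ν|` under `w ↦ (σ w · ‖ν‖_TV^(1/p), w)` is a probability measure whose signed
`p`-homogeneous projection is `ν`, and `(∫ |r|^(p*b) dμ)^(2/b) = ‖ν‖_TV ^ 2`. -/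
theorem stmt_1 {W : Type*} [MeasurableSpace W]
    (p b : ℝ) (hp : 0 < p) (hb : b ∈ Set.Icc (1 : ℝ) 2)
    (ν : SignedMeasure W) (hν : ν ≠ 0)
    (σ : W → ℝ) (hσ : σ = ν.rnDeriv ν.totalVariation)
    (μ : Measure (ℝ × W))
    (hμ : μ = Measure.map
        (fun w => (σ w * ((ν.totalVariation Set.univ).toReal) ^ ((1 : ℝ) / p), w))
        ((ν.totalVariation Set.univ)⁻¹ • ν.totalVariation)) :
    IsProbabilityMeasure μ ∧
    (∀ A : Set W, MeasurableSet A →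
      ∫ x in {x : ℝ × W | x.2 ∈ A}, Real.sign x.1 * |x.1| ^ p ∂μ = ν A) ∧
    (∫ x : ℝ × W, |x.1| ^ (p * b) ∂μ) ^ ((2 : ℝ) / b)
      = ((ν.totalVariation Set.univ).toReal) ^ 2 := by
  set T := ν.totalVariation with hTdef
  haveI : IsFiniteMeasure T := by
    rw [hTdef]
    show IsFiniteMeasure (ν.toJordanDecomposition.posPart + ν.toJordanDecomposition.negPart)
    haveI := ν.toJordanDecomposition.posPart_finite
    haveI := ν.toJordanDecomposition.negPart_finite
    infer_instance
  set c := (T Set.univ).toReal with hcdef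
  have hT0 : T Set.univ ≠ 0 := by
    intro h
    apply hν
    ext i hi
    rw [VectorMeasure.zero_apply]
    exact ν.null_of_totalVariation_zero (measure_mono_null (Set.subset_univ i) h)
  have hTtop : T Set.univ ≠ ⊤ := measure_ne_top T Set.univ
  have hc : 0 < c := ENNReal.toReal_pos hT0 hTtop
  set Q : Measure W := (T Set.univ)⁻¹ • T with hQdef
  haveI hQP : IsProbabilityMeasure Q := by
    constructor
    rw [hQdef, Measure.smul_apply, smul_eq_mul, ENNReal.inv_mul_cancel hT0 hTtop]
  have hσm : Measurable σ := hσ ▸ SignedMeasure.measurable_rnDeriv ν T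
  set f : W → ℝ × W := fun w => (σ w * c ^ ((1 : ℝ) / p), w) with hfdef
  have hfm : Measurable f := (hσm.mul_const _).prodMk measurable_id
  have hμf : μ = Measure.map f Q := hμ
  haveI hμP : IsProbabilityMeasure μ := by
    rw [hμf]; exact Measure.isProbabilityMeasure_map hfm.aemeasurable
  -- |σ| = 1 a.e.
  have habs : ∀ᵐ w ∂T, |σ w| = 1 := by
    rw [hσ]; exact abs_rnDeriv_totalVariation_ae ν
  have habsQ : ∀ᵐ w ∂Q, |σ w| = 1 := by
    rw [hQdef]; exact Measure.ae_smul_measure habs _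
  have hcp : (0 : ℝ) < c ^ ((1 : ℝ) / p) := Real.rpow_pos_of_pos hc _
  -- absolute continuity and withDensityᵥ
  have hac : ν ≪ᵥ T.toENNRealVectorMeasure := by
    rw [SignedMeasure.absolutelyContinuous_ennreal_iff,
      VectorMeasure.ennrealToMeasure_toENNRealVectorMeasure T]
  have hwd : T.withDensityᵥ σ = ν := by
    rw [hσ]; exact ν.withDensityᵥ_rnDeriv_eq T hac
  have hσint : Integrable σ T := hσ ▸ SignedMeasure.integrable_rnDeriv ν T
  have hsetint : ∀ A : Set W, MeasurableSet A → ∫ w in A, σ w ∂T = ν A := by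
    intro A hA
    rw [← hwd, withDensityᵥ_apply hσint hA]
  refine ⟨hμP, ?_, ?_⟩
  · -- part (a)
    intro A hA
    have hAset : MeasurableSet {x : ℝ × W | x.2 ∈ A} := measurable_snd hA
    have hgm : Measurable fun x : ℝ × W => Real.sign x.1 * |x.1| ^ p :=
      (measurable_real_sign.comp measurable_fst).mul
        ((measurable_fst.abs).pow_const p)
    rw [hμf, setIntegral_map hAset hgm.aestronglyMeasurable hfm.aemeasurable]
    have hpre : f ⁻¹' {x : ℝ × W | x.2 ∈ A} = A := rfl
    rw [hpre]
    have hce : ∀ᵐ w ∂Q,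
        Real.sign (σ w * c ^ ((1 : ℝ) / p)) * |σ w * c ^ ((1 : ℝ) / p)| ^ p = σ w * c := by
      filter_upwards [habsQ] with w hw
      have hch : |c ^ ((1 : ℝ) / p)| ^ p = c := by
        rw [abs_of_pos hcp, ← Real.rpow_mul hc.le, one_div_mul_cancel hp.ne', Real.rpow_one]
      rcases abs_eq (le_of_lt one_pos) |>.mp hw with h1 | h1
      · rw [h1, one_mul, Real.sign_of_pos hcp, one_mul, hch]; ring
      · have hneg : σ w * c ^ ((1 : ℝ) / p) < 0 := by rw [h1]; nlinarith
        rw [Real.sign_of_neg hneg, abs_mul, hw, one_mul, hch, h1]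
    rw [setIntegral_congr_ae hA (hce.mono fun w h _ => h)]
    have : ∫ w in A, σ w * c ∂Q = (∫ w in A, σ w ∂Q) * c := integral_mul_const c _
    rw [this]
    have hQr : Q.restrict A = (T Set.univ)⁻¹ • T.restrict A := by
      rw [hQdef, Measure.restrict_smul]
    have h2 : ∫ w in A, σ w ∂Q = ((T Set.univ)⁻¹).toReal • ∫ w in A, σ w ∂T := by
      rw [show (∫ w in A, σ w ∂Q) = ∫ w, σ w ∂((T Set.univ)⁻¹ • T.restrict A) by
        rw [← hQr]]
      exact integral_smul_measure _ _
    rw [h2, ENNReal.toReal_inv, hsetint A hA, smul_eq_mul]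
    field_simp
    rw [← hcdef, mul_div_assoc, div_self hc.ne', mul_one]
  · -- part (b)
    have hgm : Measurable fun x : ℝ × W => |x.1| ^ (p * b) :=
      (measurable_fst.abs).pow_const (p * b)
    rw [hμf, integral_map hfm.aemeasurable hgm.aestronglyMeasurable]
    have hce : ∀ᵐ w ∂Q, |σ w * c ^ ((1 : ℝ) / p)| ^ (p * b) = c ^ b := by
      filter_upwards [habsQ] with w hw
      rw [abs_mul, hw, one_mul, abs_of_pos hcp, ← Real.rpow_mul hc.le,
        show 1 / p * (p * b) = b by field_simp]
    have hbne : b ≠ 0 := by have := hb.1; linarith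
    rw [integral_congr_ae hce, integral_const, probReal_univ, one_smul,
      ← Real.rpow_mul hc.le, show b * ((2 : ℝ) / b) = 2 by field_simp,
      show ((2 : ℝ)) = ((2 : ℕ) : ℝ) by norm_num, Real.rpow_natCast]
end

section
/- Let W be a compact metric space equipped with a finite Borel measure vol of full support (e.g. the Riemannian volume of a compact manifold). Let h : W → ℝ be continuous, and let β > 0 and λ' > 0. If sup_{w ∈ W} |h(w)| > λ', then ∫_W ∫_ℝ exp( −β·( r·h(w) + λ'·|r| ) ) dr dvol(w) = +∞, where dr denotes Lebesgue measure on ℝ. -/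
open MeasureTheory

/-- analytic core of the second bullet of Proposition 3.2.
On a compact metric space `W` with a finite Borel measure `vol` of full support, if `h` is
continuous and `sup |h| > λ'`, then `∫_W ∫_ℝ exp(−β(r·h(w) + λ'·|r|)) dr dvol(w) = +∞`. -/
theorem stmt_3 {W : Type*} [MetricSpace W] [CompactSpace W]
    [MeasurableSpace W] [BorelSpace W]
    (vol : Measure W) [IsFiniteMeasure vol] [Measure.IsOpenPosMeasure vol]
    (h : W → ℝ) (hc : Continuous h)
    (β lam' : ℝ) (hβ : 0 < β) (hlam' : 0 < lam')
    (hsup : ∃ w₀ : W, lam' < |h w₀|) :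
    ∫⁻ w, (∫⁻ r, ENNReal.ofReal (Real.exp (-β * (r * h w + lam' * |r|)))
        ∂(volume : Measure ℝ)) ∂vol = ⊤ := by
  obtain ⟨w₀, hw₀⟩ := hsup
  -- inner integral is ⊤ whenever lam' < |h w|
  have inner : ∀ w : W, lam' < |h w| →
      (∫⁻ r, ENNReal.ofReal (Real.exp (-β * (r * h w + lam' * |r|)))
        ∂(volume : Measure ℝ)) = ⊤ := by
    intro w hw
    rcases le_or_gt 0 (h w) with hpos | hneg
    · -- h w > lam' : integrand ≥ 1 on Iic 0
      have hhw : lam' < h w := by rwa [abs_of_nonneg hpos] at hw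
      have key : ∀ r ∈ Set.Iic (0:ℝ),
          (1:ENNReal) ≤ ENNReal.ofReal (Real.exp (-β * (r * h w + lam' * |r|))) := by
        intro r hr
        simp only [Set.mem_Iic] at hr
        refine ENNReal.one_le_ofReal.mpr (Real.one_le_exp ?_)
        have : r * h w + lam' * |r| = r * (h w - lam') := by
          rw [abs_of_nonpos hr]; ring
        rw [this]
        have : r * (h w - lam') ≤ 0 :=
          mul_nonpos_of_nonpos_of_nonneg hr (by linarith)
        nlinarith
      refine top_le_iff.mp ?_
      calc (⊤ : ENNReal) = ∫⁻ _ in Set.Iic (0:ℝ), 1 ∂volume := by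
            simp [Real.volume_Iic]
        _ ≤ ∫⁻ r in Set.Iic (0:ℝ),
              ENNReal.ofReal (Real.exp (-β * (r * h w + lam' * |r|))) ∂volume :=
            setLIntegral_mono' measurableSet_Iic key
        _ ≤ _ := setLIntegral_le_lintegral _ _
    · -- h w < -lam' : integrand ≥ 1 on Ici 0
      have hhw : h w < -lam' := by
        rw [abs_of_neg hneg] at hw; linarith
      have key : ∀ r ∈ Set.Ici (0:ℝ),
          (1:ENNReal) ≤ ENNReal.ofReal (Real.exp (-β * (r * h w + lam' * |r|))) := by
        intro r hr
        simp only [Set.mem_Ici] at hr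
        refine ENNReal.one_le_ofReal.mpr (Real.one_le_exp ?_)
        have : r * h w + lam' * |r| = r * (h w + lam') := by
          rw [abs_of_nonneg hr]; ring
        rw [this]
        have : r * (h w + lam') ≤ 0 :=
          mul_nonpos_of_nonneg_of_nonpos hr (by linarith)
        nlinarith
      refine top_le_iff.mp ?_
      calc (⊤ : ENNReal) = ∫⁻ _ in Set.Ici (0:ℝ), 1 ∂volume := by
            simp [Real.volume_Ici]
        _ ≤ ∫⁻ r in Set.Ici (0:ℝ),
              ENNReal.ofReal (Real.exp (-β * (r * h w + lam' * |r|))) ∂volume :=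
            setLIntegral_mono' measurableSet_Ici key
        _ ≤ _ := setLIntegral_le_lintegral _ _
  -- outer integral
  set U : Set W := {w | lam' < |h w|} with hU
  have hUopen : IsOpen U := isOpen_lt continuous_const (continuous_abs.comp hc)
  have hUpos : 0 < vol U := hUopen.measure_pos vol ⟨w₀, hw₀⟩
  refine top_le_iff.mp ?_
  calc (⊤ : ENNReal) = ⊤ * vol U := (ENNReal.top_mul hUpos.ne').symm
    _ = ∫⁻ _ in U, ⊤ ∂vol := (setLIntegral_const U ⊤).symm
    _ = ∫⁻ w in U, (∫⁻ r, ENNReal.ofReal (Real.exp (-β * (r * h w + lam' * |r|)))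
          ∂(volume : Measure ℝ)) ∂vol := by
        refine setLIntegral_congr_fun hUopen.measurableSet
          (fun w hw => (inner w hw).symm)
    _ ≤ _ := setLIntegral_le_lintegral _ _
end

section
/- Let W be a measurable space and ν a nonzero finite signed measure on W. Let η* = ‖ν‖_TV^{-1}·|ν|, a Borel probability measure on W. Then |ν| is absolutely continuous with respect to η*, and ∫ (dν/dη*)² dη* = ‖ν‖_TV², where dν/dη* is the Radon–Nikodym derivative of ν with respect to η*. -/
open MeasureTheory

/-- attainment half of the η-trick for the squared TV-norm.
For a nonzero finite signed measure `ν`, the probability measure `η* = ‖ν‖_TV⁻¹ • |ν|`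
satisfies `|ν| ≪ η*` and `∫ (dν/dη*)² dη* = ‖ν‖_TV²`. -/
theorem stmt_5 {W : Type*} [MeasurableSpace W]
    (ν : SignedMeasure W) (hν : ν ≠ 0)
    (ηstar : Measure W)
    (hη : ηstar = (ν.totalVariation Set.univ)⁻¹ • ν.totalVariation) :
    IsProbabilityMeasure ηstar ∧
    ν.totalVariation ≪ ηstar ∧
    ∫ w, (ν.rnDeriv ηstar w) ^ 2 ∂ηstar = ((ν.totalVariation Set.univ).toReal) ^ 2 := by
  set μ := ν.totalVariation with hμdef
  set p := ν.toJordanDecomposition.posPart with hpdef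
  set n := ν.toJordanDecomposition.negPart with hndef
  have hμpn : μ = p + n := rfl
  haveI : IsFiniteMeasure μ := by rw [hμpn]; infer_instance
  set c := μ Set.univ with hc
  have hc_top : c ≠ ⊤ := measure_ne_top μ _
  have hc0 : c ≠ 0 := by
    intro h
    apply hν
    have hμ0 : μ = 0 := Measure.measure_univ_eq_zero.mp h
    ext s hs
    rw [VectorMeasure.zero_apply]
    exact ν.null_of_totalVariation_zero (by simp [← hμdef, hμ0])
  have hinv0 : c⁻¹ ≠ 0 := ENNReal.inv_ne_zero.mpr hc_top
  have hinv_top : c⁻¹ ≠ ⊤ := ENNReal.inv_ne_top.mpr hc0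
  -- probability measure
  have hprob : IsProbabilityMeasure ηstar := by
    constructor
    rw [hη, Measure.smul_apply, smul_eq_mul]
    exact ENNReal.inv_mul_cancel hc0 hc_top
  haveI := hprob
  -- absolute continuity both ways
  have hac : μ ≪ ηstar := by
    intro s hs
    rw [hη, Measure.smul_apply, smul_eq_mul, mul_eq_zero] at hs
    exact hs.resolve_left hinv0
  have hac' : ηstar ≪ μ := by
    rw [hη]
    exact Measure.smul_absolutelyContinuous
  refine ⟨hprob, hac, ?_⟩
  -- Radon–Nikodym derivatives w.r.t. ηstar versus μ
  have hp1 : p.rnDeriv ηstar =ᵐ[μ] fun x => c * p.rnDeriv μ x := by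
    have := Measure.rnDeriv_smul_right_of_ne_top p μ hinv0 hinv_top
    rw [← hη] at this
    refine this.trans ?_
    filter_upwards with x
    simp [inv_inv]
  have hn1 : n.rnDeriv ηstar =ᵐ[μ] fun x => c * n.rnDeriv μ x := by
    have := Measure.rnDeriv_smul_right_of_ne_top n μ hinv0 hinv_top
    rw [← hη] at this
    refine this.trans ?_
    filter_upwards with x
    simp [inv_inv]
  -- sum of derivatives is 1 a.e.
  have hsum : (fun x => p.rnDeriv μ x + n.rnDeriv μ x) =ᵐ[μ] fun _ => 1 := by
    have h1 := Measure.rnDeriv_add p n μ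
    have h2 := Measure.rnDeriv_self μ
    rw [← hμpn] at h1
    filter_upwards [h1, h2] with x hx1 hx2
    simp only [Pi.add_apply] at hx1
    rw [← hx1, hx2]
  -- mutual singularity: the two derivatives cannot both be positive
  have hpn : p ⟂ₘ n := ν.toJordanDecomposition.mutuallySingular
  set S := hpn.nullSet with hSdef
  have hSmeas : MeasurableSet S := hpn.measurableSet_nullSet
  have hp0 : ∀ᵐ x ∂μ, x ∈ S → p.rnDeriv μ x = 0 := by
    rw [← ae_restrict_iff' hSmeas]
    refine (lintegral_eq_zero_iff (Measure.measurable_rnDeriv p μ)).mp ?_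
    refine le_antisymm ?_ zero_le
    calc ∫⁻ x in S, p.rnDeriv μ x ∂μ ≤ p S := Measure.setLIntegral_rnDeriv_le S
      _ = 0 := hpn.measure_nullSet
  have hn0 : ∀ᵐ x ∂μ, x ∉ S → n.rnDeriv μ x = 0 := by
    have : ∀ᵐ x ∂μ, x ∈ Sᶜ → n.rnDeriv μ x = 0 := by
      rw [← ae_restrict_iff' hSmeas.compl]
      refine (lintegral_eq_zero_iff (Measure.measurable_rnDeriv n μ)).mp ?_
      refine le_antisymm ?_ zero_le
      calc ∫⁻ x in Sᶜ, n.rnDeriv μ x ∂μ ≤ n Sᶜ := Measure.setLIntegral_rnDeriv_le Sᶜ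
        _ = 0 := hpn.measure_compl_nullSet
    exact this
  -- the squared derivative is a.e. constant
  have key : ∀ᵐ x ∂ηstar, (ν.rnDeriv ηstar x) ^ 2 = (c.toReal) ^ 2 := by
    refine hac'.ae_le ?_
    filter_upwards [hp1, hn1, hsum, hp0, hn0] with x hxp hxn hxsum hxp0 hxn0
    have hrn : ν.rnDeriv ηstar x
        = (p.rnDeriv ηstar x).toReal - (n.rnDeriv ηstar x).toReal := rfl
    rw [hrn, hxp, hxn]
    by_cases hxS : x ∈ S
    · have hp' : p.rnDeriv μ x = 0 := hxp0 hxS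
      have hn' : n.rnDeriv μ x = 1 := by
        have := hxsum
        rw [hp', zero_add] at this
        exact this
      rw [hp', hn', mul_zero, mul_one]
      simp [neg_sq]
    · have hn' : n.rnDeriv μ x = 0 := hxn0 hxS
      have hp' : p.rnDeriv μ x = 1 := by
        have := hxsum
        rw [hn', add_zero] at this
        exact this
      rw [hp', hn', mul_zero, mul_one]
      simp
  rw [integral_congr_ae key]
  simp
end

section
/- Let W be a measurable space and t ∈ [0,1]. Let ν₀, ν₁ be finite signed measures and η₀, η₁ finite (nonnegative) measures on W such that |νᵢ| is absolutely continuous with respect to ηᵢ and fᵢ = dνᵢ/dηᵢ satisfies ∫ fᵢ² dηᵢ < ∞ for i = 0,1. Set ν_t = (1−t)ν₀ + tν₁ and η_t = (1−t)η₀ + tη₁. Then |ν_t| is absolutely continuous with respect to η_t and ∫ (dν_t/dη_t)² dη_t ≤ (1−t)·∫ f₀² dη₀ + t·∫ f₁² dη₁. -/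
open MeasureTheory
open scoped ENNReal

private lemma tv_iff_vec {W : Type*} [MeasurableSpace W] (s : SignedMeasure W) (μ : Measure W) :
    s.totalVariation ≪ μ ↔ s ≪ᵥ μ.toENNRealVectorMeasure := by
  rw [SignedMeasure.absolutelyContinuous_ennreal_iff,
    VectorMeasure.ennrealToMeasure_toENNRealVectorMeasure]

/-- joint convexity of `(ν, η) ↦ ∫ (dν/dη)² dη`.
For `t ∈ [0,1]`, `ν_t = (1−t)ν₀ + tν₁` and `η_t = (1−t)η₀ + tη₁`, if `|νᵢ| ≪ ηᵢ` with
square-integrable densities `fᵢ = dνᵢ/dηᵢ`, then `|ν_t| ≪ η_t` and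
`∫ (dν_t/dη_t)² dη_t ≤ (1−t)∫ f₀² dη₀ + t ∫ f₁² dη₁`. -/
theorem stmt_6 {W : Type*} [MeasurableSpace W]
    (t : ℝ) (ht : t ∈ Set.Icc (0 : ℝ) 1)
    (ν₀ ν₁ : SignedMeasure W) (η₀ η₁ : Measure W)
    [IsFiniteMeasure η₀] [IsFiniteMeasure η₁]
    (hac₀ : ν₀.totalVariation ≪ η₀) (hac₁ : ν₁.totalVariation ≪ η₁)
    (f₀ f₁ : W → ℝ) (hf₀ : f₀ = ν₀.rnDeriv η₀) (hf₁ : f₁ = ν₁.rnDeriv η₁)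
    (hi₀ : Integrable (fun w => f₀ w ^ 2) η₀) (hi₁ : Integrable (fun w => f₁ w ^ 2) η₁)
    (νt : SignedMeasure W) (hνt : νt = (1 - t) • ν₀ + t • ν₁)
    (ηt : Measure W) (hηt : ηt = ENNReal.ofReal (1 - t) • η₀ + ENNReal.ofReal t • η₁) :
    νt.totalVariation ≪ ηt ∧
    ∫ w, (νt.rnDeriv ηt w) ^ 2 ∂ηt
      ≤ (1 - t) * ∫ w, f₀ w ^ 2 ∂η₀ + t * ∫ w, f₁ w ^ 2 ∂η₁ := by
  obtain ⟨ht0, ht1⟩ := ht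
  -- degenerate case t = 0
  by_cases h0 : t = 0
  · subst h0
    simp only [sub_zero, ENNReal.ofReal_one, ENNReal.ofReal_zero, one_smul, zero_smul,
      add_zero] at hνt hηt
    subst hνt hηt
    refine ⟨hac₀, ?_⟩
    rw [hf₀]
    simp
  -- degenerate case t = 1
  by_cases h1 : t = 1
  · subst h1
    simp only [sub_self, ENNReal.ofReal_one, ENNReal.ofReal_zero, one_smul, zero_smul,
      zero_add] at hνt hηt
    subst hνt hηt
    refine ⟨hac₁, ?_⟩
    rw [hf₁]
    simp
  replace ht0 : 0 < t := ht0.lt_of_ne (Ne.symm h0)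
  replace ht1 : t < 1 := lt_of_le_of_ne ht1 h1
  have hs0 : (0 : ℝ) < 1 - t := by linarith
  set a : ℝ≥0∞ := ENNReal.ofReal (1 - t) with ha
  set b : ℝ≥0∞ := ENNReal.ofReal t with hb
  have ha0 : a ≠ 0 := by simp [ha, ENNReal.ofReal_pos.2 hs0, (ENNReal.ofReal_pos.2 hs0).ne']
  have hb0 : b ≠ 0 := by simp [hb, (ENNReal.ofReal_pos.2 ht0).ne']
  have haT : a ≠ ∞ := ENNReal.ofReal_ne_top
  have hbT : b ≠ ∞ := ENNReal.ofReal_ne_top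
  have hηt_fin : IsFiniteMeasure ηt := by
    constructor
    rw [hηt]
    simp only [Measure.add_apply, Measure.smul_apply, smul_eq_mul]
    exact ENNReal.add_lt_top.2 ⟨ENNReal.mul_lt_top haT.lt_top (measure_lt_top _ _),
      ENNReal.mul_lt_top hbT.lt_top (measure_lt_top _ _)⟩
  -- absolute continuity of η₀, η₁ w.r.t. ηt
  have hη₀ : η₀ ≪ ηt := by
    refine Measure.AbsolutelyContinuous.mk fun s hs h => ?_
    rw [hηt] at h
    simp only [Measure.add_apply, Measure.smul_apply, smul_eq_mul, add_eq_zero,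
      mul_eq_zero] at h
    rcases h.1 with h | h
    · exact absurd h ha0
    · exact h
  have hη₁ : η₁ ≪ ηt := by
    refine Measure.AbsolutelyContinuous.mk fun s hs h => ?_
    rw [hηt] at h
    simp only [Measure.add_apply, Measure.smul_apply, smul_eq_mul, add_eq_zero,
      mul_eq_zero] at h
    rcases h.2 with h | h
    · exact absurd h hb0
    · exact h
  -- vector-measure absolute continuity of νt
  have hν₀v : ν₀ ≪ᵥ η₀.toENNRealVectorMeasure := (tv_iff_vec _ _).mp hac₀
  have hν₁v : ν₁ ≪ᵥ η₁.toENNRealVectorMeasure := (tv_iff_vec _ _).mp hac₁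
  have hνtv : νt ≪ᵥ ηt.toENNRealVectorMeasure := by
    refine VectorMeasure.AbsolutelyContinuous.mk fun s hs h => ?_
    rw [Measure.toENNRealVectorMeasure_apply_measurable hs] at h
    have h₀ : ν₀ s = 0 := hν₀v (by
      rw [Measure.toENNRealVectorMeasure_apply_measurable hs]; exact hη₀ h)
    have h₁ : ν₁ s = 0 := hν₁v (by
      rw [Measure.toENNRealVectorMeasure_apply_measurable hs]; exact hη₁ h)
    rw [hνt]
    simp [VectorMeasure.add_apply, VectorMeasure.smul_apply, h₀, h₁]
  refine ⟨(tv_iff_vec _ _).mpr hνtv, ?_⟩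
  -- densities of η₀, η₁ w.r.t. ηt
  set g₀ : W → ℝ := fun w => (η₀.rnDeriv ηt w).toReal with hg₀
  set g₁ : W → ℝ := fun w => (η₁.rnDeriv ηt w).toReal with hg₁
  have hf₀i : Integrable f₀ η₀ := hf₀ ▸ SignedMeasure.integrable_rnDeriv ν₀ η₀
  have hf₁i : Integrable f₁ η₁ := hf₁ ▸ SignedMeasure.integrable_rnDeriv ν₁ η₁
  have hint0 : Integrable (fun w => g₀ w • f₀ w) ηt :=
    (integrable_rnDeriv_smul_iff hη₀).mpr hf₀i
  have hint1 : Integrable (fun w => g₁ w • f₁ w) ηt :=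
    (integrable_rnDeriv_smul_iff hη₁).mpr hf₁i
  set h : W → ℝ := fun w => (1 - t) * (g₀ w * f₀ w) + t * (g₁ w * f₁ w) with hh
  have hint0m : Integrable (fun w => g₀ w * f₀ w) ηt := by simpa [smul_eq_mul] using hint0
  have hint1m : Integrable (fun w => g₁ w * f₁ w) ηt := by simpa [smul_eq_mul] using hint1
  have hhint : Integrable h ηt := (hint0m.const_mul _).add (hint1m.const_mul _)
  -- νt = ηt.withDensityᵥ h
  have hwd : ηt.withDensityᵥ h = νt := by
    have e0 : ηt.withDensityᵥ (fun w => g₀ w • f₀ w) = ν₀ := by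
      rw [withDensityᵥ_rnDeriv_smul hη₀ hf₀i, hf₀,
        SignedMeasure.withDensityᵥ_rnDeriv_eq ν₀ η₀ hν₀v]
    have e1 : ηt.withDensityᵥ (fun w => g₁ w • f₁ w) = ν₁ := by
      rw [withDensityᵥ_rnDeriv_smul hη₁ hf₁i, hf₁,
        SignedMeasure.withDensityᵥ_rnDeriv_eq ν₁ η₁ hν₁v]
    have : h = (1 - t) • (fun w => g₀ w • f₀ w) + t • (fun w => g₁ w • f₁ w) := by
      funext w; simp [hh, smul_eq_mul]
    rw [this, withDensityᵥ_add ((hint0.smul ((1:ℝ) - t))) (hint1.smul t),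
      withDensityᵥ_smul, withDensityᵥ_smul, e0, e1, hνt]
  have hrn : h =ᵐ[ηt] νt.rnDeriv ηt := by
    refine SignedMeasure.eq_rnDeriv 0 h hhint ?_ (by rw [zero_add, hwd])
    exact VectorMeasure.MutuallySingular.zero_left
  -- weights sum to 1 a.e.
  have hsum : ∀ᵐ w ∂ηt, (1 - t) * g₀ w + t * g₁ w = 1 := by
    have h1 : ηt.rnDeriv ηt =ᵐ[ηt] fun _ => 1 := Measure.rnDeriv_self ηt
    have hfinA : IsFiniteMeasure (a • η₀) := by
      constructor
      simp only [Measure.smul_apply, smul_eq_mul]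
      exact ENNReal.mul_lt_top haT.lt_top (measure_lt_top _ _)
    have hfinB : IsFiniteMeasure (b • η₁) := by
      constructor
      simp only [Measure.smul_apply, smul_eq_mul]
      exact ENNReal.mul_lt_top hbT.lt_top (measure_lt_top _ _)
    have h2 : ηt.rnDeriv ηt =ᵐ[ηt] (a • η₀).rnDeriv ηt + (b • η₁).rnDeriv ηt := by
      have h2' := Measure.rnDeriv_add (a • η₀) (b • η₁) ηt
      rwa [← hηt] at h2'
    have h3 : (a • η₀).rnDeriv ηt =ᵐ[ηt] a • η₀.rnDeriv ηt :=
      Measure.rnDeriv_smul_left_of_ne_top η₀ ηt haT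
    have h4 : (b • η₁).rnDeriv ηt =ᵐ[ηt] b • η₁.rnDeriv ηt :=
      Measure.rnDeriv_smul_left_of_ne_top η₁ ηt hbT
    have h5 : ∀ᵐ w ∂ηt, η₀.rnDeriv ηt w < ∞ := Measure.rnDeriv_lt_top η₀ ηt
    have h6 : ∀ᵐ w ∂ηt, η₁.rnDeriv ηt w < ∞ := Measure.rnDeriv_lt_top η₁ ηt
    filter_upwards [h1, h2, h3, h4, h5, h6] with w e1 e2 e3 e4 e5 e6
    have key : a * η₀.rnDeriv ηt w + b * η₁.rnDeriv ηt w = 1 := by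
      rw [← e1, e2]
      simp only [Pi.add_apply, e3, e4, Pi.smul_apply, smul_eq_mul]
    have := congrArg ENNReal.toReal key
    rw [ENNReal.toReal_add (ENNReal.mul_ne_top haT e5.ne) (ENNReal.mul_ne_top hbT e6.ne),
      ENNReal.toReal_mul, ENNReal.toReal_mul, ENNReal.toReal_ofReal hs0.le,
      ENNReal.toReal_ofReal ht0.le, ENNReal.toReal_one] at this
    exact this
  -- the dominating integrand
  set ψ : W → ℝ := fun w => (1 - t) * (g₀ w * f₀ w ^ 2) + t * (g₁ w * f₁ w ^ 2) with hψ
  have hint0' : Integrable (fun w => g₀ w • (f₀ w ^ 2)) ηt :=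
    (integrable_rnDeriv_smul_iff hη₀).mpr hi₀
  have hint1' : Integrable (fun w => g₁ w • (f₁ w ^ 2)) ηt :=
    (integrable_rnDeriv_smul_iff hη₁).mpr hi₁
  have hint0'm : Integrable (fun w => g₀ w * f₀ w ^ 2) ηt := by simpa [smul_eq_mul] using hint0'
  have hint1'm : Integrable (fun w => g₁ w * f₁ w ^ 2) ηt := by simpa [smul_eq_mul] using hint1'
  have hψint : Integrable ψ ηt := (hint0'm.const_mul _).add (hint1'm.const_mul _)
  -- pointwise inequality a.e.
  have hg0nn : ∀ w, 0 ≤ g₀ w := fun w => ENNReal.toReal_nonneg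
  have hg1nn : ∀ w, 0 ≤ g₁ w := fun w => ENNReal.toReal_nonneg
  have hptwise : ∀ᵐ w ∂ηt, h w ^ 2 ≤ ψ w := by
    filter_upwards [hsum] with w hw
    have hp : (0:ℝ) ≤ (1 - t) * g₀ w := mul_nonneg hs0.le (hg0nn w)
    have hq : (0:ℝ) ≤ t * g₁ w := mul_nonneg ht0.le (hg1nn w)
    simp only [hh, hψ]
    nlinarith [mul_nonneg hp hq, sq_nonneg (f₀ w - f₁ w), sq_nonneg (f₀ w + f₁ w)]
  -- h² is integrable
  have hhm : StronglyMeasurable h := by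
    have m0 : Measurable f₀ := hf₀ ▸ SignedMeasure.measurable_rnDeriv ν₀ η₀
    have m1 : Measurable f₁ := hf₁ ▸ SignedMeasure.measurable_rnDeriv ν₁ η₁
    have mg0 : Measurable g₀ := (Measure.measurable_rnDeriv η₀ ηt).ennreal_toReal
    have mg1 : Measurable g₁ := (Measure.measurable_rnDeriv η₁ ηt).ennreal_toReal
    exact (((mg0.mul m0).const_mul _).add ((mg1.mul m1).const_mul _)).stronglyMeasurable
  have hh2int : Integrable (fun w => h w ^ 2) ηt := by
    refine Integrable.mono' hψint (hhm.pow 2).aestronglyMeasurable ?_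
    filter_upwards [hptwise] with w hw
    rwa [Real.norm_eq_abs, abs_of_nonneg (sq_nonneg _)]
  -- conclude
  have hLHS : ∫ w, (νt.rnDeriv ηt w) ^ 2 ∂ηt = ∫ w, h w ^ 2 ∂ηt := by
    refine integral_congr_ae ?_
    filter_upwards [hrn] with w hw
    rw [hw]
  have hRHS : ∫ w, ψ w ∂ηt = (1 - t) * ∫ w, f₀ w ^ 2 ∂η₀ + t * ∫ w, f₁ w ^ 2 ∂η₁ := by
    have i0 : ∫ w, g₀ w • (f₀ w ^ 2) ∂ηt = ∫ w, f₀ w ^ 2 ∂η₀ :=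
      integral_rnDeriv_smul hη₀
    have i1 : ∫ w, g₁ w • (f₁ w ^ 2) ∂ηt = ∫ w, f₁ w ^ 2 ∂η₁ :=
      integral_rnDeriv_smul hη₁
    rw [hψ]
    rw [integral_add (hint0'm.const_mul _) (hint1'm.const_mul _)]
    have e0 : ∫ w, (1 - t) * (g₀ w * f₀ w ^ 2) ∂ηt = (1 - t) * ∫ w, f₀ w ^ 2 ∂η₀ := by
      rw [integral_const_mul, ← i0]; congr 1
    have e1 : ∫ w, t * (g₁ w * f₁ w ^ 2) ∂ηt = t * ∫ w, f₁ w ^ 2 ∂η₁ := by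
      rw [integral_const_mul, ← i1]; congr 1
    rw [e0, e1]
  rw [hLHS, ← hRHS]
  exact integral_mono_ae hh2int hψint hptwise
end

section
/- Let W be a measurable space, λ > 0, and G : M(W) → ℝ a function on the space of finite signed measures on W such that G_λ(ν) := G(ν) + (λ/2)·‖ν‖_TV² is bounded below. For a Borel probability measure η on W define J_λ(η) = inf { G(ν) + (λ/2) ∫ (dν/dη)² dη : ν ∈ M(W), |ν| ≪ η, ∫ (dν/dη)² dη < ∞ }. Then inf_{η ∈ P(W)} J_λ(η) = inf_{ν ∈ M(W)} G_λ(ν). -/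
open MeasureTheory

/-- The total variation norm of a finite signed measure. -/
noncomputable def tvNorm {W : Type*} [MeasurableSpace W] (ν : SignedMeasure W) : ℝ :=
  (ν.totalVariation Set.univ).toReal

/-- The bilevel objective
`J_λ(η) = inf { G(ν) + (λ/2) ∫ (dν/dη)² dη : ν ∈ M(W), |ν| ≪ η, ∫ (dν/dη)² dη < ∞ }`. -/
noncomputable def Jlam {W : Type*} [MeasurableSpace W]
    (lam : ℝ) (G : SignedMeasure W → ℝ) (η : Measure W) : ℝ :=
  sInf { z : ℝ | ∃ ν : SignedMeasure W,
    ν.totalVariation ≪ η ∧ Integrable (fun w => ν.rnDeriv η w ^ 2) η ∧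
    z = G ν + lam / 2 * ∫ w, ν.rnDeriv η w ^ 2 ∂η }

lemma tvNorm_nonneg {W : Type*} [MeasurableSpace W] (ν : SignedMeasure W) : 0 ≤ tvNorm ν :=
  ENNReal.toReal_nonneg

/-- TV norm is at most the integral of |rnDeriv| (in fact equal). -/
lemma tvNorm_le_integral_abs {W : Type*} [MeasurableSpace W] (ν : SignedMeasure W)
    (η : Measure W) [IsProbabilityMeasure η] (hac : ν.totalVariation ≪ η) :
    tvNorm ν ≤ ∫ w, |ν.rnDeriv η w| ∂η := by
  have hν : ν ≪ᵥ η.toENNRealVectorMeasure := by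
    rw [MeasureTheory.SignedMeasure.absolutelyContinuous_ennreal_iff,
      MeasureTheory.VectorMeasure.ennrealToMeasure_toENNRealVectorMeasure]
    exact hac
  have hWD := MeasureTheory.SignedMeasure.withDensityᵥ_rnDeriv_eq ν η hν
  have hInt := MeasureTheory.SignedMeasure.integrable_rnDeriv ν η
  have key : ∀ A : Set W, MeasurableSet A → ν A = ∫ w in A, ν.rnDeriv η w ∂η := by
    intro A hA
    conv_lhs => rw [← hWD]
    rw [withDensityᵥ_apply hInt hA]
  obtain ⟨S, hSm, hposS, hnegSc⟩ := ν.toJordanDecomposition.mutuallySingular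
  set pos := ν.toJordanDecomposition.posPart with hposdef
  set neg := ν.toJordanDecomposition.negPart with hnegdef
  have happ : ∀ A : Set W, MeasurableSet A → ν A = (pos A).toReal - (neg A).toReal := by
    intro A hA
    conv_lhs => rw [← ν.toSignedMeasure_toJordanDecomposition,
      MeasureTheory.JordanDecomposition.toSignedMeasure]
    rw [MeasureTheory.VectorMeasure.sub_apply,
      MeasureTheory.Measure.toSignedMeasure_apply_measurable hA,
      MeasureTheory.Measure.toSignedMeasure_apply_measurable hA]
    rfl
  have hposU : pos Set.univ = pos Sᶜ := by
    rw [← measure_add_measure_compl hSm, hposS, zero_add]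
  have hnegU : neg Set.univ = neg S := by
    have := measure_add_measure_compl (μ := neg) hSm
    rw [hnegSc, add_zero] at this
    exact this.symm
  have htv : tvNorm ν = (pos Set.univ).toReal + (neg Set.univ).toReal := by
    rw [tvNorm, MeasureTheory.SignedMeasure.totalVariation, Measure.add_apply,
      ENNReal.toReal_add (measure_ne_top _ _) (measure_ne_top _ _)]
  have hνSc : ν Sᶜ = (pos Set.univ).toReal := by
    rw [happ Sᶜ hSm.compl, hnegSc, ← hposU]; simp
  have hνS : ν S = -(neg Set.univ).toReal := by
    rw [happ S hSm, hposS, ← hnegU]; simp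
  have htv2 : tvNorm ν = ν Sᶜ - ν S := by rw [hνSc, hνS, htv]; ring
  have habs := hInt.abs
  calc tvNorm ν = ∫ w in Sᶜ, ν.rnDeriv η w ∂η - ∫ w in S, ν.rnDeriv η w ∂η := by
        rw [htv2, key Sᶜ hSm.compl, key S hSm]
    _ ≤ |∫ w in Sᶜ, ν.rnDeriv η w ∂η| + |∫ w in S, ν.rnDeriv η w ∂η| := by
        have := abs_nonneg (∫ w in Sᶜ, ν.rnDeriv η w ∂η)
        have h1 := le_abs_self (∫ w in Sᶜ, ν.rnDeriv η w ∂η)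
        have h2 := neg_abs_le (∫ w in S, ν.rnDeriv η w ∂η)
        linarith
    _ ≤ (∫ w in Sᶜ, |ν.rnDeriv η w| ∂η) + ∫ w in S, |ν.rnDeriv η w| ∂η := by
        gcongr
        · simpa [Real.norm_eq_abs] using
            norm_integral_le_integral_norm (μ := η.restrict Sᶜ) (ν.rnDeriv η)
        · simpa [Real.norm_eq_abs] using
            norm_integral_le_integral_norm (μ := η.restrict S) (ν.rnDeriv η)
    _ = ∫ w, |ν.rnDeriv η w| ∂η := by
        rw [add_comm, integral_add_compl hSm habs]

/-- Cauchy–Schwarz: for a probability measure, `(∫|f|)² ≤ ∫ f²`. -/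
lemma sq_integral_abs_le {W : Type*} [MeasurableSpace W] (η : Measure W)
    [IsProbabilityMeasure η] {f : W → ℝ} (hm : AEStronglyMeasurable f η)
    (hi : Integrable (fun w => f w ^ 2) η) :
    (∫ w, |f w| ∂η) ^ 2 ≤ ∫ w, f w ^ 2 ∂η := by
  have hf2 : MemLp f 2 η := (memLp_two_iff_integrable_sq hm).2 hi
  have ha : MemLp (fun w => |f w|) 2 η := hf2.abs
  have h := ProbabilityTheory.variance_nonneg (fun w => |f w|) η
  rw [ProbabilityTheory.variance_eq_sub ha] at h
  have heq : (∫ w, ((fun w => |f w|) ^ 2) w ∂η) = ∫ w, f w ^ 2 ∂η := by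
    simp [sq_abs]
  rw [heq] at h
  linarith

lemma key_lower {W : Type*} [MeasurableSpace W] (ν : SignedMeasure W) (η : Measure W)
    [IsProbabilityMeasure η] (hac : ν.totalVariation ≪ η)
    (hint : Integrable (fun w => ν.rnDeriv η w ^ 2) η) :
    tvNorm ν ^ 2 ≤ ∫ w, ν.rnDeriv η w ^ 2 ∂η := by
  have h1 := tvNorm_le_integral_abs ν η hac
  have h2 := sq_integral_abs_le η
    (MeasureTheory.SignedMeasure.measurable_rnDeriv ν η).aestronglyMeasurable hint
  calc tvNorm ν ^ 2 ≤ (∫ w, |ν.rnDeriv η w| ∂η) ^ 2 := by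
        exact pow_le_pow_left₀ (tvNorm_nonneg ν) h1 2
    _ ≤ ∫ w, ν.rnDeriv η w ^ 2 ∂η := h2

/-- Witness measure achieving (at most) `tvNorm ν ^ 2`. -/
lemma exists_witness {W : Type*} [MeasurableSpace W] [Nonempty W] (ν : SignedMeasure W) :
    ∃ η : Measure W, IsProbabilityMeasure η ∧ ν.totalVariation ≪ η ∧
      Integrable (fun w => ν.rnDeriv η w ^ 2) η ∧
      ∫ w, ν.rnDeriv η w ^ 2 ∂η ≤ tvNorm ν ^ 2 := by
  set pos := ν.toJordanDecomposition.posPart with hposdef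
  set neg := ν.toJordanDecomposition.negPart with hnegdef
  set T := ν.totalVariation Set.univ with hT
  by_cases hT0 : T = 0
  · -- ν = 0 case: totalVariation is zero
    have hpos0 : pos = 0 := by
      have : pos Set.univ + neg Set.univ = 0 := by
        rw [← Measure.add_apply]; exact hT0
      exact MeasureTheory.Measure.measure_univ_eq_zero.mp (by simpa using (add_eq_zero.mp this).1)
    have hneg0 : neg = 0 := by
      have : pos Set.univ + neg Set.univ = 0 := by
        rw [← Measure.add_apply]; exact hT0
      exact MeasureTheory.Measure.measure_univ_eq_zero.mp (by simpa using (add_eq_zero.mp this).2)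
    refine ⟨Measure.dirac (Classical.arbitrary W), inferInstance, ?_, ?_, ?_⟩
    · have : ν.totalVariation = 0 := by
        rw [MeasureTheory.SignedMeasure.totalVariation, ← hposdef, ← hnegdef, hpos0, hneg0,
          add_zero]
      rw [this]
      exact Measure.AbsolutelyContinuous.mk fun s _ _ => rfl
    all_goals {
      have hz : (fun w => ν.rnDeriv (Measure.dirac (Classical.arbitrary W)) w ^ 2)
          =ᵐ[Measure.dirac (Classical.arbitrary W)] 0 := by
        have h1 := MeasureTheory.Measure.rnDeriv_zero (Measure.dirac (Classical.arbitrary W))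
        have h2 : ν.rnDeriv (Measure.dirac (Classical.arbitrary W))
            =ᵐ[Measure.dirac (Classical.arbitrary W)] 0 := by
          rw [MeasureTheory.SignedMeasure.rnDeriv_def, ← hposdef, ← hnegdef, hpos0, hneg0]
          filter_upwards [h1] with w hw
          simp [hw]
        filter_upwards [h2] with w hw
        simp [hw]
      first
      | exact (integrable_zero _ _ _).congr hz.symm
      | { rw [integral_congr_ae hz]; simpa using sq_nonneg (tvNorm ν) }
    }
  · haveI : IsFiniteMeasure ν.totalVariation := by
      rw [MeasureTheory.SignedMeasure.totalVariation]; infer_instance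
    have hTtop : T ≠ ⊤ := measure_ne_top _ _
    set η : Measure W := T⁻¹ • ν.totalVariation with hηdef
    have hTsmul : T • η = ν.totalVariation := by
      rw [hηdef, smul_smul, ENNReal.mul_inv_cancel hT0 hTtop, one_smul]
    have hprob : IsProbabilityMeasure η := by
      constructor
      rw [hηdef, Measure.smul_apply, smul_eq_mul, ← hT, ENNReal.inv_mul_cancel hT0 hTtop]
    have hac : ν.totalVariation ≪ η := by
      refine Measure.AbsolutelyContinuous.mk fun s _ hs => ?_
      rw [hηdef, Measure.smul_apply, smul_eq_mul] at hs
      rcases mul_eq_zero.mp hs with h | h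
      · exact absurd h (ENNReal.inv_ne_zero.mpr hTtop)
      · exact h
    -- a.e. bound on the Radon–Nikodym derivative
    have hadd : pos.rnDeriv η + neg.rnDeriv η =ᵐ[η] ν.totalVariation.rnDeriv η :=
      (MeasureTheory.Measure.rnDeriv_add' pos neg η).symm
    have hself : ν.totalVariation.rnDeriv η =ᵐ[η] fun _ => T := by
      rw [← hTsmul]
      calc (T • η).rnDeriv η =ᵐ[η] T • η.rnDeriv η :=
            MeasureTheory.Measure.rnDeriv_smul_left_of_ne_top η η hTtop
        _ =ᵐ[η] fun _ => T := by
            filter_upwards [MeasureTheory.Measure.rnDeriv_self η] with w hw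
            simp [hw]
    have hbound : ∀ᵐ w ∂η, |ν.rnDeriv η w| ≤ tvNorm ν := by
      filter_upwards [hadd, hself] with w h1 h2
      rw [h2] at h1
      have hple : pos.rnDeriv η w ≤ T := by
        rw [← h1]; exact le_add_of_nonneg_right zero_le
      have hnle : neg.rnDeriv η w ≤ T := by
        rw [← h1]; exact le_add_of_nonneg_left zero_le
      have hp' : (pos.rnDeriv η w).toReal ≤ T.toReal := ENNReal.toReal_mono hTtop hple
      have hn' : (neg.rnDeriv η w).toReal ≤ T.toReal := ENNReal.toReal_mono hTtop hnle
      have hp0 : (0:ℝ) ≤ (pos.rnDeriv η w).toReal := ENNReal.toReal_nonneg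
      have hn0 : (0:ℝ) ≤ (neg.rnDeriv η w).toReal := ENNReal.toReal_nonneg
      have : ν.rnDeriv η w = (pos.rnDeriv η w).toReal - (neg.rnDeriv η w).toReal := rfl
      rw [this, tvNorm, ← hT]
      rw [abs_le]
      constructor <;> linarith
    have hbound2 : ∀ᵐ w ∂η, ν.rnDeriv η w ^ 2 ≤ tvNorm ν ^ 2 := by
      filter_upwards [hbound] with w hw
      calc ν.rnDeriv η w ^ 2 = |ν.rnDeriv η w| ^ 2 := (sq_abs _).symm
        _ ≤ tvNorm ν ^ 2 := pow_le_pow_left₀ (abs_nonneg _) hw 2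
    have hmeas : AEStronglyMeasurable (fun w => ν.rnDeriv η w ^ 2) η :=
      ((MeasureTheory.SignedMeasure.measurable_rnDeriv ν η).pow_const 2).aestronglyMeasurable
    have hint : Integrable (fun w => ν.rnDeriv η w ^ 2) η := by
      refine Integrable.mono' (integrable_const (tvNorm ν ^ 2)) hmeas ?_
      filter_upwards [hbound2] with w hw
      rw [Real.norm_eq_abs, abs_of_nonneg (sq_nonneg _)]
      exact hw
    refine ⟨η, hprob, hac, hint, ?_⟩
    calc ∫ w, ν.rnDeriv η w ^ 2 ∂η ≤ ∫ _, tvNorm ν ^ 2 ∂η :=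
          integral_mono_ae hint (integrable_const _) hbound2
      _ = tvNorm ν ^ 2 := by simp

/-- value-equality part of Proposition 3.3.
If `G_λ(ν) = G(ν) + (λ/2)‖ν‖_TV²` is bounded below, then
`inf_{η ∈ P(W)} J_λ(η) = inf_{ν ∈ M(W)} G_λ(ν)`. -/
theorem stmt_7 {W : Type*} [MeasurableSpace W] [Nonempty W]
    (lam : ℝ) (hlam : 0 < lam) (G : SignedMeasure W → ℝ)
    (c : ℝ)
    (hbdd : ∀ ν : SignedMeasure W, c ≤ G ν + lam / 2 * tvNorm ν ^ 2) :
    sInf { y : ℝ | ∃ η : Measure W, IsProbabilityMeasure η ∧ y = Jlam lam G η }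
      = sInf { y : ℝ | ∃ ν : SignedMeasure W, y = G ν + lam / 2 * tvNorm ν ^ 2 } := by
  set A := { y : ℝ | ∃ η : Measure W, IsProbabilityMeasure η ∧ y = Jlam lam G η } with hA
  set B := { y : ℝ | ∃ ν : SignedMeasure W, y = G ν + lam / 2 * tvNorm ν ^ 2 } with hB
  have hlam2 : (0:ℝ) ≤ lam / 2 := by linarith
  have hBne : B.Nonempty := ⟨G 0 + lam / 2 * tvNorm 0 ^ 2, 0, rfl⟩
  have hBbdd : BddBelow B := by
    refine ⟨c, ?_⟩
    rintro y ⟨ν, rfl⟩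
    exact hbdd ν
  -- every element of the inner set S_η dominates an element of B
  have hSdom : ∀ (η : Measure W), IsProbabilityMeasure η →
      ∀ z ∈ { z : ℝ | ∃ ν : SignedMeasure W,
        ν.totalVariation ≪ η ∧ Integrable (fun w => ν.rnDeriv η w ^ 2) η ∧
        z = G ν + lam / 2 * ∫ w, ν.rnDeriv η w ^ 2 ∂η }, sInf B ≤ z := by
    rintro η hη z ⟨ν, hac, hint, rfl⟩
    have hkey := key_lower ν η hac hint
    have h1 : G ν + lam / 2 * tvNorm ν ^ 2 ≤ G ν + lam / 2 * ∫ w, ν.rnDeriv η w ^ 2 ∂η := by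
      have := mul_le_mul_of_nonneg_left hkey hlam2
      linarith
    exact le_trans (csInf_le hBbdd ⟨ν, rfl⟩) h1
  -- each inner set is nonempty (take ν = 0)
  have hSne : ∀ (η : Measure W), IsProbabilityMeasure η →
      ∃ z, z ∈ { z : ℝ | ∃ ν : SignedMeasure W,
        ν.totalVariation ≪ η ∧ Integrable (fun w => ν.rnDeriv η w ^ 2) η ∧
        z = G ν + lam / 2 * ∫ w, ν.rnDeriv η w ^ 2 ∂η } := by
    intro η hη
    have hz : (fun w => (0 : SignedMeasure W).rnDeriv η w ^ 2) =ᵐ[η] 0 := by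
      have h2 : (0 : SignedMeasure W).rnDeriv η =ᵐ[η] 0 := by
        rw [MeasureTheory.SignedMeasure.rnDeriv_def]
        have hJ : (0 : SignedMeasure W).toJordanDecomposition = 0 :=
          MeasureTheory.SignedMeasure.toJordanDecomposition_zero
        rw [hJ]
        filter_upwards [MeasureTheory.Measure.rnDeriv_zero η] with w hw
        simp only [MeasureTheory.JordanDecomposition.zero_posPart,
          MeasureTheory.JordanDecomposition.zero_negPart, hw]
        simp
      filter_upwards [h2] with w hw
      simp [hw]
    refine ⟨G 0 + lam / 2 * ∫ w, (0 : SignedMeasure W).rnDeriv η w ^ 2 ∂η, 0, ?_, ?_, rfl⟩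
    · rw [MeasureTheory.SignedMeasure.totalVariation_zero]
      exact Measure.AbsolutelyContinuous.mk fun s _ _ => rfl
    · exact (integrable_zero _ _ _).congr hz.symm
  have hA_lb : ∀ y ∈ A, sInf B ≤ y := by
    rintro y ⟨η, hη, rfl⟩
    rw [Jlam]
    exact le_csInf (hSne η hη) (hSdom η hη)
  have hAne : A.Nonempty := by
    refine ⟨Jlam lam G (Measure.dirac (Classical.arbitrary W)),
      Measure.dirac (Classical.arbitrary W), inferInstance, rfl⟩
  have hAbdd : BddBelow A := ⟨sInf B, hA_lb⟩
  apply le_antisymm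
  · -- sInf A ≤ sInf B
    refine le_csInf hBne ?_
    rintro y ⟨ν, rfl⟩
    obtain ⟨η, hη, hac, hint, hle⟩ := exists_witness ν
    have h1 : sInf A ≤ Jlam lam G η := csInf_le hAbdd ⟨η, hη, rfl⟩
    have h2 : Jlam lam G η ≤ G ν + lam / 2 * ∫ w, ν.rnDeriv η w ^ 2 ∂η := by
      rw [Jlam]
      refine csInf_le ?_ ⟨ν, hac, hint, rfl⟩
      refine ⟨sInf B, hSdom η hη⟩
    have h3 : G ν + lam / 2 * ∫ w, ν.rnDeriv η w ^ 2 ∂η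
        ≤ G ν + lam / 2 * tvNorm ν ^ 2 := by
      have := mul_le_mul_of_nonneg_left hle hlam2
      linarith
    exact le_trans h1 (le_trans h2 h3)
  · exact le_csInf hAne hA_lb
end

section
/- Let W be a measurable space and let G : M(W) → ℝ be convex on the real vector space M(W) of finite signed measures on W. Let λ > 0 and suppose ν ∈ M(W) minimizes ν' ↦ G(ν') + (λ/2)·‖ν'‖_TV² over M(W). Then ν also minimizes ν' ↦ G(ν') + λ·‖ν‖_TV·‖ν'‖_TV over M(W). -/
open MeasureTheory

namespace TVAux
variable {W : Type*} [MeasurableSpace W]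

lemma apply_eq (s : SignedMeasure W) {i : Set W} (hi : MeasurableSet i) :
    s i = (s.toJordanDecomposition.posPart i).toReal
        - (s.toJordanDecomposition.negPart i).toReal := by
  conv_lhs => rw [← s.toSignedMeasure_toJordanDecomposition]
  rw [JordanDecomposition.toSignedMeasure, VectorMeasure.sub_apply,
    Measure.toSignedMeasure_apply_measurable hi, Measure.toSignedMeasure_apply_measurable hi]
  rfl

lemma tvNorm_nonneg (s : SignedMeasure W) : 0 ≤ tvNorm s := ENNReal.toReal_nonneg

lemma tvNorm_eq (s : SignedMeasure W) :
    tvNorm s = (s.toJordanDecomposition.posPart Set.univ).toReal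
             + (s.toJordanDecomposition.negPart Set.univ).toReal := by
  rw [tvNorm, SignedMeasure.totalVariation, Measure.add_apply,
    ENNReal.toReal_add (measure_ne_top _ _) (measure_ne_top _ _)]

lemma diff_le (s : SignedMeasure W) {A : Set W} (hA : MeasurableSet A) :
    s A - s Aᶜ ≤ tvNorm s := by
  rw [apply_eq s hA, apply_eq s hA.compl, tvNorm_eq]
  have h1 : (s.toJordanDecomposition.posPart A).toReal
      ≤ (s.toJordanDecomposition.posPart Set.univ).toReal :=
    ENNReal.toReal_mono (measure_ne_top _ _) (measure_mono (Set.subset_univ _))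
  have h2 : (s.toJordanDecomposition.negPart Aᶜ).toReal
      ≤ (s.toJordanDecomposition.negPart Set.univ).toReal :=
    ENNReal.toReal_mono (measure_ne_top _ _) (measure_mono (Set.subset_univ _))
  have h3 : 0 ≤ (s.toJordanDecomposition.negPart A).toReal := ENNReal.toReal_nonneg
  have h4 : 0 ≤ (s.toJordanDecomposition.posPart Aᶜ).toReal := ENNReal.toReal_nonneg
  linarith

lemma exists_set (s : SignedMeasure W) :
    ∃ A : Set W, MeasurableSet A ∧ tvNorm s = s A - s Aᶜ := by
  obtain ⟨S, hS, _, _, hpos, hneg⟩ :=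
    s.toJordanDecomposition.exists_compl_positive_negative
  refine ⟨Sᶜ, hS.compl, ?_⟩
  have e1 : s.toJordanDecomposition.posPart Set.univ = s.toJordanDecomposition.posPart Sᶜ :=
    le_antisymm
      (by rw [← Set.compl_union_self S]
          exact (measure_union_le _ _).trans (by rw [hpos, add_zero]))
      (measure_mono (Set.subset_univ _))
  have e2 : s.toJordanDecomposition.negPart Set.univ = s.toJordanDecomposition.negPart S :=
    le_antisymm
      (by rw [← Set.union_compl_self S]
          exact (measure_union_le _ _).trans (by rw [hneg, add_zero]))
      (measure_mono (Set.subset_univ _))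
  rw [apply_eq s hS.compl, compl_compl, apply_eq s hS, tvNorm_eq, e1, e2, hpos, hneg]
  simp

lemma tvNorm_add_le (s t : SignedMeasure W) : tvNorm (s + t) ≤ tvNorm s + tvNorm t := by
  obtain ⟨A, hA, hEq⟩ := exists_set (s + t)
  rw [hEq, VectorMeasure.add_apply, VectorMeasure.add_apply]
  have := diff_le s hA
  have := diff_le t hA
  linarith

lemma tvNorm_smul (r : ℝ) (s : SignedMeasure W) : tvNorm (r • s) = |r| * tvNorm s := by
  rcases le_or_gt 0 r with hr | hr
  · rw [tvNorm_eq, tvNorm_eq, SignedMeasure.toJordanDecomposition_smul_real,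
      JordanDecomposition.real_smul_posPart_nonneg _ _ hr,
      JordanDecomposition.real_smul_negPart_nonneg _ _ hr, abs_of_nonneg hr]
    simp [ENNReal.toReal_smul, NNReal.smul_def, Real.coe_toNNReal _ hr, mul_add]
  · rw [tvNorm_eq, tvNorm_eq, SignedMeasure.toJordanDecomposition_smul_real,
      JordanDecomposition.real_smul_posPart_neg _ _ hr,
      JordanDecomposition.real_smul_negPart_neg _ _ hr, abs_of_neg hr]
    simp [ENNReal.toReal_smul, NNReal.smul_def, Real.coe_toNNReal _ (neg_nonneg.2 hr.le), mul_add]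
    ring

end TVAux

/-- Appendix A.1, first direction of the regularization-path equivalence.
If `G` is convex on `M(W)` and `ν` minimizes `ν' ↦ G(ν') + (λ/2)‖ν'‖_TV²`, then `ν` also
minimizes `ν' ↦ G(ν') + λ‖ν‖_TV·‖ν'‖_TV`. -/
theorem stmt_9 {W : Type*} [MeasurableSpace W]
    (G : SignedMeasure W → ℝ) (hG : ConvexOn ℝ Set.univ G)
    (lam : ℝ) (hlam : 0 < lam)
    (ν : SignedMeasure W)
    (hmin : ∀ ν' : SignedMeasure W,
      G ν + lam / 2 * tvNorm ν ^ 2 ≤ G ν' + lam / 2 * tvNorm ν' ^ 2) :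
    ∀ ν' : SignedMeasure W,
      G ν + lam * tvNorm ν * tvNorm ν ≤ G ν' + lam * tvNorm ν * tvNorm ν' := by
  intro ν'
  set a := tvNorm ν with ha
  set b := tvNorm ν' with hb
  have ha0 : 0 ≤ a := TVAux.tvNorm_nonneg ν
  have hb0 : 0 ≤ b := TVAux.tvNorm_nonneg ν'
  have key : ∀ t : ℝ, 0 < t → t ≤ 1 →
      G ν - G ν' ≤ lam * a * (b - a) + lam / 2 * t * (b - a) ^ 2 := by
    intro t ht0 ht1
    set νt := (1 - t) • ν + t • ν' with hνt
    have h1t : 0 ≤ 1 - t := by linarith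
    have hnorm : tvNorm νt ≤ (1 - t) * a + t * b := by
      calc tvNorm νt ≤ tvNorm ((1 - t) • ν) + tvNorm (t • ν') := TVAux.tvNorm_add_le _ _
        _ = (1 - t) * a + t * b := by
            rw [TVAux.tvNorm_smul, TVAux.tvNorm_smul, abs_of_nonneg h1t, abs_of_nonneg ht0.le]
    have hc0 : 0 ≤ (1 - t) * a + t * b := by positivity
    have hsq : tvNorm νt ^ 2 ≤ ((1 - t) * a + t * b) ^ 2 :=
      pow_le_pow_left₀ (TVAux.tvNorm_nonneg νt) hnorm 2
    have hconv : G νt ≤ (1 - t) * G ν + t * G ν' := by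
      have := hG.2 (Set.mem_univ ν) (Set.mem_univ ν') h1t ht0.le (by ring)
      simpa using this
    have hm := hmin νt
    have hexp : ((1 - t) * a + t * b) ^ 2 = a ^ 2 + 2 * a * t * (b - a) + t ^ 2 * (b - a) ^ 2 := by
      ring
    have h2 : t * (G ν - G ν') ≤ lam / 2 * (2 * a * t * (b - a) + t ^ 2 * (b - a) ^ 2) := by
      nlinarith [hm, hconv, hsq]
    have := mul_le_mul_of_nonneg_left h2 (le_of_lt (inv_pos.2 ht0))
    rw [← mul_assoc, inv_mul_cancel₀ ht0.ne', one_mul] at this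
    calc G ν - G ν' ≤ t⁻¹ * (lam / 2 * (2 * a * t * (b - a) + t ^ 2 * (b - a) ^ 2)) := this
      _ = lam * a * (b - a) + lam / 2 * t * (b - a) ^ 2 := by
          field_simp
  have hfinal : G ν - G ν' ≤ lam * a * (b - a) := by
    apply le_of_forall_pos_le_add
    intro ε hε
    set K := lam / 2 * (b - a) ^ 2 with hK
    have hK0 : 0 ≤ K := by positivity
    set t := min 1 (ε / (K + 1)) with htdef
    have ht0 : 0 < t := lt_min one_pos (div_pos hε (by linarith))
    have ht1 : t ≤ 1 := min_le_left _ _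
    have := key t ht0 ht1
    have htK : lam / 2 * t * (b - a) ^ 2 ≤ ε := by
      have h1 : t ≤ ε / (K + 1) := min_le_right _ _
      have : t * K ≤ (ε / (K + 1)) * K := mul_le_mul_of_nonneg_right h1 hK0
      have h2 : (ε / (K + 1)) * K ≤ ε := by
        rw [div_mul_eq_mul_div, div_le_iff₀ (by linarith)]
        nlinarith
      calc lam / 2 * t * (b - a) ^ 2 = t * K := by rw [hK]; ring
        _ ≤ ε := le_trans ‹t * K ≤ _› h2
    linarith
  nlinarith [hfinal]
end

section
/- Let W be a measurable space and let G : M(W) → ℝ be convex on the real vector space M(W) of finite signed measures on W. Let λ̃ > 0 and suppose ν ∈ M(W), ν ≠ 0, minimizes ν' ↦ G(ν') + λ̃·‖ν'‖_TV over M(W). Then ν also minimizes ν' ↦ G(ν') + ( λ̃ / (2·‖ν‖_TV) )·‖ν'‖_TV² over M(W). -/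
open MeasureTheory

lemma tvNorm_pos {W : Type*} [MeasurableSpace W] {ν : SignedMeasure W} (hν : ν ≠ 0) :
    0 < tvNorm ν := by
  have hfin : ν.totalVariation Set.univ ≠ ⊤ := by
    rw [SignedMeasure.totalVariation, Measure.add_apply]
    exact ENNReal.add_ne_top.2 ⟨measure_ne_top _ _, measure_ne_top _ _⟩
  have hne : ν.totalVariation Set.univ ≠ 0 := by
    intro h0
    apply hν
    ext s hs
    rw [VectorMeasure.zero_apply]
    exact ν.null_of_totalVariation_zero
      (le_antisymm (h0 ▸ measure_mono (Set.subset_univ s)) zero_le)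
  exact ENNReal.toReal_pos hne hfin

/-- Appendix A.1, second direction of the regularization-path equivalence.
If `G` is convex on `M(W)` and `ν ≠ 0` minimizes `ν' ↦ G(ν') + λ̃‖ν'‖_TV`, then `ν` also
minimizes `ν' ↦ G(ν') + (λ̃/(2‖ν‖_TV))·‖ν'‖_TV²`. -/
theorem stmt_10 {W : Type*} [MeasurableSpace W]
    (G : SignedMeasure W → ℝ) (hG : ConvexOn ℝ Set.univ G)
    (tlam : ℝ) (htlam : 0 < tlam)
    (ν : SignedMeasure W) (hν : ν ≠ 0)
    (hmin : ∀ ν' : SignedMeasure W,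
      G ν + tlam * tvNorm ν ≤ G ν' + tlam * tvNorm ν') :
    ∀ ν' : SignedMeasure W,
      G ν + tlam / (2 * tvNorm ν) * tvNorm ν ^ 2
        ≤ G ν' + tlam / (2 * tvNorm ν) * tvNorm ν' ^ 2 := by
  intro ν'
  have ha : 0 < tvNorm ν := tvNorm_pos hν
  have hb : 0 ≤ tvNorm ν' := ENNReal.toReal_nonneg
  have key := hmin ν'
  -- AM-GM: tlam * tvNorm ν' ≤ tlam/(2*a) * (b^2 + a^2) where a = tvNorm ν
  have amgm : tlam * tvNorm ν' + tlam / (2 * tvNorm ν) * tvNorm ν ^ 2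
      ≤ tlam * tvNorm ν + tlam / (2 * tvNorm ν) * tvNorm ν' ^ 2 := by
    have hc : 0 < tlam / (2 * tvNorm ν) := by positivity
    have hmul : tlam / (2 * tvNorm ν) * (2 * tvNorm ν) = tlam :=
      div_mul_cancel₀ _ (by positivity)
    nlinarith [mul_nonneg hc.le (sq_nonneg (tvNorm ν - tvNorm ν'))]
  linarith
end

section
/- Let W be a measurable space, η a Borel probability measure on W, λ > 0 and L₀ ≥ 0. Let k : W × W → ℝ be measurable, symmetric (k(w,w') = k(w',w)), with |k(w,w')| ≤ L₀ for all w, w', and positive semi-definite in the sense that ∫∫ k(w,w')·u(w)·u(w') dη(w) dη(w') ≥ 0 for every bounded measurable u : W → ℝ. Let V, h : W → ℝ be bounded measurable functions satisfying, for every w ∈ W: λ·h(w) + ∫ k(w,w')·h(w') dη(w') = V(w). Then sup_{w ∈ W} |h(w)| ≤ (1/λ)·(1 + L₀/λ)·sup_{w ∈ W} |V(w)|. -/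
open MeasureTheory

/-- quantitative content of Lemma D.4.
If `k` is a measurable symmetric kernel, bounded by `L₀` and positive semi-definite on
`L²(η)`, and bounded measurable `h`, `V` satisfy `λ h(w) + ∫ k(w,w') h(w') dη(w') = V(w)`,
then `sup |h| ≤ (1/λ)(1 + L₀/λ) sup |V|` (encoded via arbitrary upper bounds `CV` of `|V|`). -/
theorem stmt_12 {W : Type*} [MeasurableSpace W]
    (η : Measure W) [IsProbabilityMeasure η]
    (lam L₀ : ℝ) (hlam : 0 < lam) (hL₀ : 0 ≤ L₀)
    (k : W × W → ℝ) (hk : Measurable k)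
    (hsymm : ∀ w w' : W, k (w, w') = k (w', w))
    (hbound : ∀ w w' : W, |k (w, w')| ≤ L₀)
    (hpsd : ∀ u : W → ℝ, Measurable u → (∃ C, ∀ w, |u w| ≤ C) →
      0 ≤ ∫ w, (∫ w', k (w, w') * u w * u w' ∂η) ∂η)
    (V h : W → ℝ) (hV : Measurable V) (hh : Measurable h)
    (hVb : ∃ C, ∀ w, |V w| ≤ C) (hhb : ∃ C, ∀ w, |h w| ≤ C)
    (heq : ∀ w : W, lam * h w + ∫ w', k (w, w') * h w' ∂η = V w)
    (CV : ℝ) (hCV : ∀ w : W, |V w| ≤ CV) :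
    ∀ w : W, |h w| ≤ 1 / lam * (1 + L₀ / lam) * CV := by
  intro w₀
  have hCV0 : 0 ≤ CV := le_trans (abs_nonneg _) (hCV w₀)
  obtain ⟨Ch, hCh⟩ := hhb
  -- integrability of h
  have hInt_h : Integrable h η :=
    (integrable_const Ch).mono' hh.aestronglyMeasurable
      (ae_of_all _ fun w => by simpa [Real.norm_eq_abs] using hCh w)
  have hInt_absh : Integrable (fun w => |h w|) η := hInt_h.abs
  have hInt_sq : Integrable (fun w => h w ^ 2) η := by
    refine (integrable_const (Ch ^ 2)).mono' (hh.pow_const 2).aestronglyMeasurable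
      (ae_of_all _ fun w => ?_)
    have h1 : |h w| ≤ Ch := hCh w
    have h2 := abs_nonneg (h w)
    simp only [Real.norm_eq_abs]
    calc |h w ^ 2| = |h w| ^ 2 := by rw [abs_pow]
    _ ≤ Ch ^ 2 := by nlinarith
  set I : ℝ := ∫ w, |h w| ∂η with hI
  have hI0 : 0 ≤ I := integral_nonneg fun w => abs_nonneg _
  -- Cauchy–Schwarz with 1 : I^2 ≤ ∫ h^2
  have hCS : I ^ 2 ≤ ∫ w, h w ^ 2 ∂η := by
    have hnn : 0 ≤ ∫ w, (|h w| - I) ^ 2 ∂η := integral_nonneg fun w => sq_nonneg _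
    have hexp : ∫ w, (|h w| - I) ^ 2 ∂η
        = (∫ w, h w ^ 2 ∂η) - 2 * I * I + I ^ 2 := by
      have hptw : ∀ w, (|h w| - I) ^ 2 = h w ^ 2 - 2 * I * |h w| + I ^ 2 := by
        intro w; rw [sub_sq, sq_abs]; ring
      have i1 : Integrable (fun w => h w ^ 2 - 2 * I * |h w|) η :=
        hInt_sq.sub (hInt_absh.const_mul _)
      rw [integral_congr_ae (ae_of_all _ hptw),
        integral_add i1 (integrable_const _),
        integral_sub hInt_sq (hInt_absh.const_mul _), integral_const_mul,
        integral_const]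
      simp [← hI]
    nlinarith [hnn, hexp]
  -- the integral operator applied to h
  set g : W → ℝ := fun w => ∫ w', k (w, w') * h w' ∂η with hg
  have hgw : ∀ w, g w = ∫ w', k (w, w') * h w' ∂η := fun _ => rfl
  have hInt_kh : ∀ w, Integrable (fun w' => k (w, w') * h w') η := by
    intro w
    refine (integrable_const (L₀ * Ch)).mono'
      (((hk.comp (measurable_const.prodMk measurable_id)).mul hh).aestronglyMeasurable)
      (ae_of_all _ fun w' => ?_)
    simp only [Real.norm_eq_abs, abs_mul]
    exact mul_le_mul (hbound w w') (hCh w') (abs_nonneg _) hL₀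
  have hgbound : ∀ w, |g w| ≤ L₀ * I := by
    intro w
    calc |g w| ≤ ∫ w', |k (w, w') * h w'| ∂η := by
          rw [hgw]
          simpa only [Real.norm_eq_abs] using
            norm_integral_le_integral_norm (μ := η) (fun w' => k (w, w') * h w')
    _ ≤ ∫ w', L₀ * |h w'| ∂η := by
          refine integral_mono (hInt_kh w).abs (hInt_absh.const_mul _) fun w' => ?_
          rw [abs_mul]
          exact mul_le_mul_of_nonneg_right (hbound w w') (abs_nonneg _)
    _ = L₀ * I := integral_const_mul _ _
  have hgmeas : Measurable g := by
    apply StronglyMeasurable.measurable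
    exact (hk.mul (hh.comp measurable_snd)).stronglyMeasurable.integral_prod_right'
  have hInt_hg : Integrable (fun w => h w * g w) η := by
    refine (integrable_const (Ch * (L₀ * I))).mono' (hh.mul hgmeas).aestronglyMeasurable
      (ae_of_all _ fun w => ?_)
    simp only [Real.norm_eq_abs, abs_mul]
    exact mul_le_mul (hCh w) (hgbound w) (abs_nonneg _) (le_trans (abs_nonneg _) (hCh w))
  have hpsd' : 0 ≤ ∫ w, h w * g w ∂η := by
    have hp := hpsd h hh ⟨Ch, hCh⟩
    have hrw : ∀ w, (∫ w', k (w, w') * h w * h w' ∂η) = h w * g w := by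
      intro w
      rw [hgw, ← integral_const_mul]
      exact integral_congr_ae (ae_of_all _ fun w' => by ring)
    rwa [integral_congr_ae (ae_of_all _ hrw)] at hp
  -- key L² inequality : lam * ∫ h² ≤ CV * I
  have hkey : lam * ∫ w, h w ^ 2 ∂η ≤ CV * I := by
    have heq' : ∀ w, lam * h w ^ 2 + h w * g w = h w * V w := by
      intro w
      have h1 := heq w
      rw [← hgw] at h1
      rw [← h1]; ring
    have hIntV : Integrable (fun w => h w * V w) η := by
      refine (integrable_const (Ch * CV)).mono' (hh.mul hV).aestronglyMeasurable
        (ae_of_all _ fun w => ?_)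
      simp only [Real.norm_eq_abs, abs_mul]
      exact mul_le_mul (hCh w) (hCV w) (abs_nonneg _) (le_trans (abs_nonneg _) (hCh w))
    have h1 : lam * (∫ w, h w ^ 2 ∂η) + ∫ w, h w * g w ∂η = ∫ w, h w * V w ∂η := by
      rw [← integral_const_mul, ← integral_add (hInt_sq.const_mul _) hInt_hg]
      exact integral_congr_ae (ae_of_all _ heq')
    have h2 : ∫ w, h w * V w ∂η ≤ CV * I := by
      calc ∫ w, h w * V w ∂η ≤ ∫ w, CV * |h w| ∂η := by
            refine integral_mono hIntV (hInt_absh.const_mul _) fun w => ?_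
            calc h w * V w ≤ |h w * V w| := le_abs_self _
            _ = |h w| * |V w| := abs_mul _ _
            _ ≤ |h w| * CV := mul_le_mul_of_nonneg_left (hCV w) (abs_nonneg _)
            _ = CV * |h w| := mul_comm _ _
      _ = CV * I := integral_const_mul _ _
    linarith [hpsd']
  -- hence I ≤ CV / lam
  have hIbound : I ≤ CV / lam := by
    have h3 : lam * I ^ 2 ≤ CV * I := le_trans (by nlinarith [hCS]) hkey
    rcases eq_or_lt_of_le hI0 with hI0' | hIpos
    · rw [← hI0']; positivity
    · rw [le_div_iff₀ hlam]
      nlinarith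
  -- pointwise bound
  have hfin : lam * |h w₀| ≤ CV + L₀ * (CV / lam) := by
    have heq0 := heq w₀
    rw [← hgw] at heq0
    have h4 : lam * h w₀ = V w₀ - g w₀ := by linarith
    calc lam * |h w₀| = |lam * h w₀| := by rw [abs_mul, abs_of_pos hlam]
    _ = |V w₀ - g w₀| := by rw [h4]
    _ ≤ |V w₀| + |g w₀| := abs_sub _ _
    _ ≤ CV + L₀ * (CV / lam) := by
          refine add_le_add (hCV w₀) (le_trans (hgbound w₀) ?_)
          exact mul_le_mul_of_nonneg_left hIbound hL₀
  have h5 : |h w₀| ≤ (CV + L₀ * (CV / lam)) / lam := by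
    rw [le_div_iff₀ hlam]; linarith
  calc |h w₀| ≤ (CV + L₀ * (CV / lam)) / lam := h5
  _ = 1 / lam * (1 + L₀ / lam) * CV := by field_simp
end

section
/- Let H be a real Hilbert space, W a measurable space, η a Borel probability measure on W, λ > 0, B ≥ 0, and φ : W → H a strongly measurable map with ‖φ(w)‖ ≤ B for all w. Let y ∈ H, and suppose h₀ ∈ H satisfies λ·h₀ + ∫ ⟨φ(w), h₀⟩·φ(w) dη(w) = y (a Bochner integral). Then for every measurable f : W → ℝ with ∫ f(w)² dη(w) < ∞: (1/2)·‖ ∫ f(w)·φ(w) dη(w) − y ‖² + (λ/2)·∫ f(w)² dη(w) ≥ (λ/2)·⟨y, h₀⟩, and equality holds for f(w) = ⟨h₀, φ(w)⟩. -/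
open MeasureTheory
open scoped RealInnerProductSpace

/-- core of Proposition E.1: kernel ridge regression value formula.
If `h₀` satisfies `λ h₀ + ∫ ⟪φ w, h₀⟫ • φ w dη = y` (i.e. `h₀ = (K_η + λ Id)⁻¹ y`), then for
every measurable `f` with `∫ f² dη < ∞`,
`(1/2)‖∫ f(w) φ(w) dη − y‖² + (λ/2)∫ f² dη ≥ (λ/2)⟪y, h₀⟫`,
with equality at `f(w) = ⟪h₀, φ(w)⟫`. -/
theorem stmt_13 {H : Type*} [NormedAddCommGroup H] [InnerProductSpace ℝ H] [CompleteSpace H]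
    {W : Type*} [MeasurableSpace W]
    (η : Measure W) [IsProbabilityMeasure η]
    (lam B : ℝ) (hlam : 0 < lam) (hB : 0 ≤ B)
    (φ : W → H) (hφm : StronglyMeasurable φ) (hφb : ∀ w, ‖φ w‖ ≤ B)
    (y h₀ : H)
    (hfix : lam • h₀ + ∫ w, ⟪φ w, h₀⟫ • φ w ∂η = y) :
    (∀ f : W → ℝ, Measurable f → Integrable (fun w => f w ^ 2) η →
      lam / 2 * ⟪y, h₀⟫
        ≤ 1 / 2 * ‖(∫ w, f w • φ w ∂η) - y‖ ^ 2 + lam / 2 * ∫ w, f w ^ 2 ∂η) ∧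
    1 / 2 * ‖(∫ w, ⟪h₀, φ w⟫ • φ w ∂η) - y‖ ^ 2
        + lam / 2 * ∫ w, ⟪h₀, φ w⟫ ^ 2 ∂η
      = lam / 2 * ⟪y, h₀⟫ := by
  set f₀ : W → ℝ := fun w => ⟪h₀, φ w⟫ with hf₀def
  have hf₀m : StronglyMeasurable f₀ := stronglyMeasurable_const.inner hφm
  have hf₀b : ∀ w, |f₀ w| ≤ ‖h₀‖ * B := fun w =>
    (abs_real_inner_le_norm h₀ (φ w)).trans
      (mul_le_mul_of_nonneg_left (hφb w) (norm_nonneg _))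
  have hf₀int : Integrable f₀ η := by
    refine Integrable.mono' (integrable_const (‖h₀‖ * B)) hf₀m.aestronglyMeasurable ?_
    filter_upwards with w
    simpa [Real.norm_eq_abs] using hf₀b w
  have hf₀sq : Integrable (fun w => f₀ w ^ 2) η := by
    refine Integrable.mono' (integrable_const ((‖h₀‖ * B) ^ 2))
      ((hf₀m.measurable.pow_const 2).aestronglyMeasurable) ?_
    filter_upwards with w
    rw [Real.norm_eq_abs, abs_pow]
    exact pow_le_pow_left₀ (abs_nonneg _) (hf₀b w) 2
  -- smul integrability for any L¹ f
  have hsmul : ∀ f : W → ℝ, AEStronglyMeasurable f η → Integrable f η →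
      Integrable (fun w => f w • φ w) η := by
    intro f hfm hfi
    refine Integrable.mono' ((hfi.abs.const_mul B)) (hfm.smul hφm.aestronglyMeasurable) ?_
    filter_upwards with w
    rw [norm_smul, Real.norm_eq_abs]
    calc |f w| * ‖φ w‖ ≤ |f w| * B := mul_le_mul_of_nonneg_left (hφb w) (abs_nonneg _)
      _ = B * |f w| := mul_comm _ _
  have hf₀φ : Integrable (fun w => f₀ w • φ w) η :=
    hsmul f₀ hf₀m.aestronglyMeasurable hf₀int
  -- the inner product swap
  have hswap : ∀ f : W → ℝ, Integrable (fun w => f w • φ w) η →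
      ⟪h₀, ∫ w, f w • φ w ∂η⟫ = ∫ w, f w * f₀ w ∂η := by
    intro f hf
    rw [← integral_inner hf h₀]
    refine integral_congr_ae (Filter.Eventually.of_forall fun w => ?_)
    show ⟪h₀, f w • φ w⟫ = f w * f₀ w
    rw [real_inner_smul_right]
  -- the fixed point gives: ∫ f₀ • φ − y = −(lam • h₀)
  have hgint : (∫ w, f₀ w • φ w ∂η) = ∫ w, ⟪φ w, h₀⟫ • φ w ∂η := by
    refine integral_congr_ae (Filter.Eventually.of_forall fun w => ?_)
    show (⟪h₀, φ w⟫ : ℝ) • φ w = ⟪φ w, h₀⟫ • φ w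
    rw [real_inner_comm]
  have hgy : (∫ w, f₀ w • φ w ∂η) - y = -(lam • h₀) := by
    rw [hgint, ← hfix]; abel
  -- equality part
  have hEq : 1 / 2 * ‖(∫ w, f₀ w • φ w ∂η) - y‖ ^ 2
      + lam / 2 * ∫ w, f₀ w ^ 2 ∂η = lam / 2 * ⟪y, h₀⟫ := by
    have h1 : (∫ w, f₀ w ^ 2 ∂η) = ⟪h₀, ∫ w, f₀ w • φ w ∂η⟫ := by
      rw [hswap f₀ hf₀φ]
      exact integral_congr_ae (Filter.Eventually.of_forall fun w => by ring)
    have h2 : ⟪y, h₀⟫ = lam * ‖h₀‖ ^ 2 + ⟪h₀, ∫ w, f₀ w • φ w ∂η⟫ := by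
      rw [← hfix, hgint, inner_add_left, real_inner_smul_left, real_inner_self_eq_norm_sq,
        real_inner_comm]
    rw [hgy, norm_neg, norm_smul, Real.norm_eq_abs, abs_of_pos hlam, h1, h2, mul_pow]
    ring
  refine ⟨?_, hEq⟩
  -- inequality part
  intro f hfm hf2
  have hfint : Integrable f η :=
    ((memLp_two_iff_integrable_sq hfm.aestronglyMeasurable).2 hf2).integrable (by norm_num)
  have hfφ : Integrable (fun w => f w • φ w) η :=
    hsmul f hfm.aestronglyMeasurable hfint
  have hff₀ : Integrable (fun w => f w * f₀ w) η := by
    refine Integrable.mono' (hfint.abs.const_mul (‖h₀‖ * B))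
      (hfm.aestronglyMeasurable.mul hf₀m.aestronglyMeasurable) ?_
    filter_upwards with w
    rw [Real.norm_eq_abs, abs_mul]
    calc |f w| * |f₀ w| ≤ |f w| * (‖h₀‖ * B) :=
          mul_le_mul_of_nonneg_left (hf₀b w) (abs_nonneg _)
      _ = ‖h₀‖ * B * |f w| := mul_comm _ _
  -- d = f − f₀
  set d : W → ℝ := fun w => f w - f₀ w with hddef
  have hdint : Integrable d η := hfint.sub hf₀int
  have hdf₀ : Integrable (fun w => d w * f₀ w) η := by
    have h : (fun w => d w * f₀ w) = fun w => f w * f₀ w - f₀ w ^ 2 := by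
      funext w; simp only [hddef]; ring
    rw [h]; exact hff₀.sub hf₀sq
  have hdsq : Integrable (fun w => d w ^ 2) η := by
    have h : (fun w => d w ^ 2)
        = fun w => f w ^ 2 - 2 * (f w * f₀ w) + f₀ w ^ 2 := by
      funext w; simp only [hddef]; ring
    rw [h]
    exact (hf2.sub (hff₀.const_mul 2)).add hf₀sq
  have hdφ : Integrable (fun w => d w • φ w) η :=
    hsmul d hdint.aestronglyMeasurable hdint
  have hAd : (∫ w, d w • φ w ∂η) = (∫ w, f w • φ w ∂η) - ∫ w, f₀ w • φ w ∂η := by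
    rw [← integral_sub hfφ hf₀φ]
    refine integral_congr_ae (Filter.Eventually.of_forall fun w => ?_)
    show d w • φ w = f w • φ w - f₀ w • φ w
    rw [hddef, sub_smul]
  have hsplit : (∫ w, f w • φ w ∂η) - y = (∫ w, d w • φ w ∂η) - lam • h₀ := by
    rw [hAd, ← hfix, ← hgint]; abel
  -- inner term
  have hinnera : ⟪∫ w, d w • φ w ∂η, lam • h₀⟫ = lam * ∫ w, d w * f₀ w ∂η := by
    rw [real_inner_smul_right, real_inner_comm, hswap d hdφ]
  -- ∫ f² = ∫ d² + 2 ∫ d f₀ + ∫ f₀²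
  have hIsq : (∫ w, f w ^ 2 ∂η)
      = (∫ w, d w ^ 2 ∂η) + 2 * (∫ w, d w * f₀ w ∂η) + ∫ w, f₀ w ^ 2 ∂η := by
    have hB2 : Integrable (fun w => 2 * (d w * f₀ w)) η := hdf₀.const_mul 2
    have hA2 : Integrable (fun w => d w ^ 2 + 2 * (d w * f₀ w)) η := hdsq.add hB2
    have h : (fun w => f w ^ 2)
        = fun w => d w ^ 2 + 2 * (d w * f₀ w) + f₀ w ^ 2 := by
      funext w; simp only [hddef]; ring
    rw [h, integral_add hA2 hf₀sq, integral_add hdsq hB2, integral_const_mul]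
  -- norm expansion
  have hnorm : ‖(∫ w, d w • φ w ∂η) - lam • h₀‖ ^ 2
      = ‖∫ w, d w • φ w ∂η‖ ^ 2 - 2 * ⟪∫ w, d w • φ w ∂η, lam • h₀⟫
        + ‖lam • h₀‖ ^ 2 := @norm_sub_sq_real _ _ _ _ _
  have hnl : ‖lam • h₀‖ ^ 2 = lam ^ 2 * ‖h₀‖ ^ 2 := by
    rw [norm_smul, Real.norm_eq_abs, mul_pow, sq_abs]
  -- put everything together
  have key : 1 / 2 * ‖(∫ w, f w • φ w ∂η) - y‖ ^ 2 + lam / 2 * ∫ w, f w ^ 2 ∂η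
      = (1 / 2 * ‖∫ w, d w • φ w ∂η‖ ^ 2 + lam / 2 * ∫ w, d w ^ 2 ∂η)
        + (1 / 2 * ‖(∫ w, f₀ w • φ w ∂η) - y‖ ^ 2 + lam / 2 * ∫ w, f₀ w ^ 2 ∂η) := by
    rw [hsplit, hnorm, hnl, hinnera, hIsq, hgy, norm_neg, norm_smul, Real.norm_eq_abs,
      abs_of_pos hlam, mul_pow]
    ring
  rw [key, hEq]
  have h1 : 0 ≤ ‖∫ w, d w • φ w ∂η‖ ^ 2 := sq_nonneg _
  have h2 : 0 ≤ ∫ w, d w ^ 2 ∂η := integral_nonneg fun w => sq_nonneg _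
  nlinarith [hlam.le]
end

section
/- Let c₁, C₁, C₃, C₄ > 0. There exists α > 0, depending only on c₁, C₁, C₃, C₄, such that the following holds. Let g : ℝ → ℝ be continuously differentiable on [−1,1] and three times differentiable on (−1,1), with c₁ ≤ g'(r) ≤ C₁ for all r ∈ [−1,1], |g''(r)|·(1−r²)^{1/2} ≤ C₃ and |g'''(r)|·(1−r²)^{3/2} ≤ C₄ for all r ∈ (−1,1). Then for every d ≥ 1, every v in the unit sphere S^d of ℝ^{d+1}, and every Borel probability measure η on S^d: ∫ ( g(1) − g(⟨v,w⟩) ) dη(w) ≥ α·∫ ( arccos⟨v,w⟩ )² dη(w). -/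
open MeasureTheory
open scoped RealInnerProductSpace

lemma arccos_sq_le_five {r : ℝ} (hr : r ∈ Set.Icc (-1 : ℝ) 1) :
    Real.arccos r ^ 2 ≤ 5 * (1 - r) := by
  have h1 : Real.cos (Real.arccos r) = r := Real.cos_arccos hr.1 hr.2
  set θ := Real.arccos r with hθ
  have h0 : 0 ≤ θ := Real.arccos_nonneg r
  have hπ : θ ≤ Real.pi := Real.arccos_le_pi r
  have habs : |θ| ≤ Real.pi := by rw [abs_of_nonneg h0]; exact hπ
  have hb := Real.cos_le_one_sub_mul_cos_sq habs
  rw [h1] at hb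
  have hpi2 : Real.pi ^ 2 < 10 := by
    nlinarith [Real.pi_lt_d2, Real.pi_pos]
  have hpos : (0:ℝ) < Real.pi ^ 2 := by positivity
  rw [div_mul_eq_mul_div, le_sub_iff_add_le, ← le_sub_iff_add_le',
    div_le_iff₀ hpos] at hb
  nlinarith [sq_nonneg θ]

lemma mvt_lb {c₁ : ℝ} {g g₁ : ℝ → ℝ}
    (hderiv : ∀ r ∈ Set.Icc (-1 : ℝ) 1, HasDerivWithinAt g (g₁ r) (Set.Icc (-1 : ℝ) 1) r)
    (hg₁ : ∀ r ∈ Set.Icc (-1 : ℝ) 1, c₁ ≤ g₁ r)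
    {r : ℝ} (hr : r ∈ Set.Icc (-1 : ℝ) 1) : c₁ * (1 - r) ≤ g 1 - g r := by
  have hcont : ContinuousOn g (Set.Icc (-1 : ℝ) 1) :=
    fun x hx => (hderiv x hx).continuousWithinAt
  have hint : interior (Set.Icc (-1 : ℝ) 1) = Set.Ioo (-1 : ℝ) 1 := interior_Icc
  have hdiff : DifferentiableOn ℝ g (interior (Set.Icc (-1 : ℝ) 1)) := by
    rw [hint]
    intro x hx
    exact ((hderiv x (Set.Ioo_subset_Icc_self hx)).mono Set.Ioo_subset_Icc_self).differentiableWithinAt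
  have hge : ∀ x ∈ interior (Set.Icc (-1 : ℝ) 1), c₁ ≤ deriv g x := by
    rw [hint]
    intro x hx
    have hd : HasDerivAt g (g₁ x) x := by
      refine (hderiv x (Set.Ioo_subset_Icc_self hx)).hasDerivAt ?_
      exact Icc_mem_nhds hx.1 hx.2
    rw [hd.deriv]
    exact hg₁ x (Set.Ioo_subset_Icc_self hx)
  exact (convex_Icc _ _).mul_sub_le_image_sub_of_le_deriv hcont hdiff hge r hr 1
    (Set.right_mem_Icc.2 (by norm_num)) hr.2

/-- core inequality of Lemma F.5, weak coercivity.
There is an `α > 0` depending only on `c₁, C₁, C₃, C₄` such that for any `g` that is `C¹` on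
`[−1,1]` (with derivative `g₁`) and three times differentiable on `(−1,1)` (with second and
third derivatives `g₂, g₃`) satisfying `c₁ ≤ g₁ ≤ C₁`, `|g₂(r)|(1−r²)^{1/2} ≤ C₃`,
`|g₃(r)|(1−r²)^{3/2} ≤ C₄`, every `d ≥ 1`, every `v ∈ S^d`, and every Borel probability
measure `η` on `S^d`:
`∫ (g(1) − g(⟪v,w⟫)) dη(w) ≥ α ∫ (arccos ⟪v,w⟫)² dη(w)`. -/
theorem stmt_14 (c₁ C₁ C₃ C₄ : ℝ)
    (hc₁ : 0 < c₁) (hC₁ : 0 < C₁) (hC₃ : 0 < C₃) (hC₄ : 0 < C₄) :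
    ∃ α > (0 : ℝ), ∀ g g₁ g₂ g₃ : ℝ → ℝ,
      (∀ r ∈ Set.Icc (-1 : ℝ) 1, HasDerivWithinAt g (g₁ r) (Set.Icc (-1 : ℝ) 1) r) →
      ContinuousOn g₁ (Set.Icc (-1 : ℝ) 1) →
      (∀ r ∈ Set.Ioo (-1 : ℝ) 1, HasDerivAt g₁ (g₂ r) r) →
      (∀ r ∈ Set.Ioo (-1 : ℝ) 1, HasDerivAt g₂ (g₃ r) r) →
      (∀ r ∈ Set.Icc (-1 : ℝ) 1, c₁ ≤ g₁ r ∧ g₁ r ≤ C₁) →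
      (∀ r ∈ Set.Ioo (-1 : ℝ) 1, |g₂ r| * (1 - r ^ 2) ^ ((1 : ℝ) / 2) ≤ C₃) →
      (∀ r ∈ Set.Ioo (-1 : ℝ) 1, |g₃ r| * (1 - r ^ 2) ^ ((3 : ℝ) / 2) ≤ C₄) →
      ∀ d : ℕ, 1 ≤ d →
      ∀ v : EuclideanSpace ℝ (Fin (d + 1)), ‖v‖ = 1 →
      ∀ η : Measure (EuclideanSpace ℝ (Fin (d + 1))), IsProbabilityMeasure η →
      (∀ᵐ w ∂η, ‖w‖ = 1) →
      α * ∫ w, Real.arccos ⟪v, w⟫ ^ 2 ∂η ≤ ∫ w, (g 1 - g ⟪v, w⟫) ∂η := by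
  refine ⟨c₁ / 5, by positivity, ?_⟩
  intro g g₁ g₂ g₃ hderiv hg₁cont hd2 hd3 hg₁ hb2 hb3 d hd v hv η hη hsph
  -- the clamped version of g
  set G : ℝ → ℝ := fun r => g (max (-1) (min 1 r)) with hG
  have hcontg : ContinuousOn g (Set.Icc (-1 : ℝ) 1) :=
    fun x hx => (hderiv x hx).continuousWithinAt
  have hclamp : ∀ r : ℝ, max (-1 : ℝ) (min 1 r) ∈ Set.Icc (-1 : ℝ) 1 := by
    intro r
    constructor
    · exact le_max_left _ _
    · exact max_le (by norm_num) (min_le_left _ _)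
  have hGcont : Continuous G := by
    apply hcontg.comp_continuous
    · exact continuous_const.max (continuous_const.min continuous_id)
    · exact hclamp
  -- a.e. inner product is in [-1,1]
  have h_ae : ∀ᵐ w ∂η, ⟪v, w⟫ ∈ Set.Icc (-1 : ℝ) 1 := by
    filter_upwards [hsph] with w hw
    have := abs_real_inner_le_norm v w
    rw [hv, hw, one_mul] at this
    exact abs_le.1 this
  have h_eq : ∀ᵐ w ∂η, g ⟪v, w⟫ = G ⟪v, w⟫ := by
    filter_upwards [h_ae] with w hw
    have : max (-1 : ℝ) (min 1 ⟪v, w⟫) = ⟪v, w⟫ := by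
      rw [min_eq_right hw.2, max_eq_right hw.1]
    simp only [hG, this]
  -- continuity of inner product
  have hinner : Continuous fun w : EuclideanSpace ℝ (Fin (d + 1)) => ⟪v, w⟫ :=
    continuous_const.inner continuous_id
  -- integrability of arccos squared
  have hintA : Integrable (fun w => Real.arccos ⟪v, w⟫ ^ 2) η := by
    refine Integrable.mono' (integrable_const (Real.pi ^ 2))
      ((Real.continuous_arccos.comp hinner).pow 2).aestronglyMeasurable ?_
    filter_upwards with w
    rw [Real.norm_eq_abs, abs_of_nonneg (sq_nonneg _)]
    have h1 := Real.arccos_nonneg ⟪v, w⟫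
    have h2 := Real.arccos_le_pi ⟪v, w⟫
    nlinarith
  -- bound for G
  obtain ⟨M, hM⟩ := (isCompact_Icc).exists_bound_of_continuousOn hcontg
  have hintG : Integrable (fun w => g 1 - G ⟪v, w⟫) η := by
    refine Integrable.mono' (integrable_const (2 * M))
      (((continuous_const.sub (hGcont.comp hinner))).aestronglyMeasurable) ?_
    filter_upwards with w
    rw [Real.norm_eq_abs]
    have h1 : ‖g 1‖ ≤ M := hM 1 (by norm_num)
    have h2 : ‖g (max (-1) (min 1 ⟪v, w⟫))‖ ≤ M := hM _ (hclamp _)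
    rw [Real.norm_eq_abs] at h1 h2
    simp only [G]
    calc |g 1 - g (max (-1) (min 1 ⟪v, w⟫))| ≤ |g 1| + |g (max (-1) (min 1 ⟪v, w⟫))| :=
          abs_sub _ _
      _ ≤ 2 * M := by linarith
  -- pointwise bound
  have hpt : ∀ᵐ w ∂η, c₁ / 5 * Real.arccos ⟪v, w⟫ ^ 2 ≤ g 1 - G ⟪v, w⟫ := by
    filter_upwards [h_ae, h_eq] with w hw heq
    rw [← heq]
    have h1 : c₁ * (1 - ⟪v, w⟫) ≤ g 1 - g ⟪v, w⟫ :=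
      mvt_lb hderiv (fun r hr => (hg₁ r hr).1) hw
    have h2 : Real.arccos ⟪v, w⟫ ^ 2 ≤ 5 * (1 - ⟪v, w⟫) := arccos_sq_le_five hw
    nlinarith
  calc c₁ / 5 * ∫ w, Real.arccos ⟪v, w⟫ ^ 2 ∂η
      = ∫ w, c₁ / 5 * Real.arccos ⟪v, w⟫ ^ 2 ∂η := (integral_const_mul _ _).symm
    _ ≤ ∫ w, (g 1 - G ⟪v, w⟫) ∂η := integral_mono_ae (hintA.const_mul _) hintG hpt
    _ = ∫ w, (g 1 - g ⟪v, w⟫) ∂η := by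
        refine integral_congr_ae ?_
        filter_upwards [h_eq] with w heq
        rw [heq]
end
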